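/- arXiv:1401.7476 — 5 statements merged into one kernel-verified Lean document; each statement's English description precedes it below -/
import Mathlib

section
/- For every n ≥ 1, the Minkowski sum of the segments q_{ij} over all pairs 1 ≤ i < j ≤ n, translated by the point S, equals the standard permutohedron: Σ_{i<j} q_{ij} + {S} = Π_n. -/
open scoped Pointwise RealInnerProductSpace BigOperators

noncomputable section

/-- The face of a set `K` in direction `ξ`: points of `K` maximizing `⟪·, ξ⟫`. -/
def face {n : ℕ} (K : Set (EuclideanSpace ℝ (Fin n))) (ξ : EuclideanSpace ℝ (Fin n)) :
    Set (EuclideanSpace ℝ (Fin n)) :=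
  {x ∈ K | ∀ y ∈ K, ⟪y, ξ⟫ ≤ ⟪x, ξ⟫}

/-- The `i`-th standard basis vector of `ℝⁿ`. -/
def stdVec (n : ℕ) (i : Fin n) : EuclideanSpace ℝ (Fin n) := EuclideanSpace.single i 1

/-- The all-ones vector `S = (1,…,1)`. -/
def allOnes (n : ℕ) : EuclideanSpace ℝ (Fin n) := WithLp.toLp 2 (fun _ => 1)

/-- The segment `q_{ij} = [e_i, e_j]`. -/
def qseg (n : ℕ) (i j : Fin n) : Set (EuclideanSpace ℝ (Fin n)) :=
  segment ℝ (stdVec n i) (stdVec n j)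

/-- The point `R_i = n·e_i − Σ_j e_j` (coordinate `n−1` at position `i`, `−1` elsewhere). -/
def Rpt (n : ℕ) (i : Fin n) : EuclideanSpace ℝ (Fin n) := (n : ℝ) • stdVec n i - allOnes n

/-- The segment `r_i = [0, R_i]`. -/
def rseg (n : ℕ) (i : Fin n) : Set (EuclideanSpace ℝ (Fin n)) := segment ℝ 0 (Rpt n i)

/-- The standard permutohedron `Π_n`: the convex hull of all points obtained by
permuting the coordinates of `(1, 2, …, n)`. -/
def permutohedron (n : ℕ) : Set (EuclideanSpace ℝ (Fin n)) :=
  convexHull ℝ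
    {x : EuclideanSpace ℝ (Fin n) | ∃ σ : Equiv.Perm (Fin n), ∀ i, x i = ((σ i : ℕ) : ℝ) + 1}

namespace PermuZono
variable {n : ℕ}

def Pr (n : ℕ) : Finset (Fin n × Fin n) := Finset.univ.filter (fun p => p.1 < p.2)

lemma mem_Pr {p : Fin n × Fin n} : p ∈ Pr n ↔ p.1 < p.2 := by simp [Pr]

def pairOf (a b : Fin n) : Fin n × Fin n := if a ≤ b then (a, b) else (b, a)

lemma pairOf_comm (a b : Fin n) : pairOf a b = pairOf b a := by
  unfold pairOf
  rcases lt_trichotomy a b with h | rfl | h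
  · rw [if_pos h.le, if_neg (not_le.2 h)]
  · simp
  · rw [if_neg (not_le.2 h), if_pos h.le]

lemma pairOf_mem {a b : Fin n} (h : a ≠ b) : pairOf a b ∈ Pr n := by
  unfold pairOf
  rcases lt_or_gt_of_ne h with hlt | hgt
  · rw [if_pos hlt.le]; exact mem_Pr.2 hlt
  · rw [if_neg (not_le.2 hgt)]; exact mem_Pr.2 hgt

lemma pairOf_cases (a b : Fin n) : pairOf a b = (a, b) ∨ pairOf a b = (b, a) := by
  unfold pairOf; split <;> simp

lemma eq_or_eq_of_pairOf {x a b : Fin n} (h : x = (pairOf a b).1 ∨ x = (pairOf a b).2) :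
    x = a ∨ x = b := by
  rcases pairOf_cases a b with hp | hp <;> rw [hp] at h <;> tauto

lemma fst_mem_pair (a b : Fin n) : a = (pairOf a b).1 ∨ a = (pairOf a b).2 := by
  rcases pairOf_cases a b with hp | hp <;> rw [hp] <;> simp

lemma snd_mem_pair (a b : Fin n) : b = (pairOf a b).1 ∨ b = (pairOf a b).2 := by
  rcases pairOf_cases a b with hp | hp <;> rw [hp] <;> simp

lemma pairOf_eq_self {p : Fin n × Fin n} (hp : p.1 < p.2) : pairOf p.1 p.2 = p := by
  unfold pairOf; rw [if_pos hp.le]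

lemma pairOf_ne {a b x y : Fin n} (hx : x ≠ a) (hx2 : x ≠ b) :
    pairOf a b ≠ pairOf x y := by
  intro h
  have := fst_mem_pair x y
  rw [← h] at this
  rcases eq_or_eq_of_pairOf this with rfl | rfl
  · exact hx rfl
  · exact hx2 rfl

def Valid (c : Fin n × Fin n → Fin n) : Prop := ∀ p ∈ Pr n, c p = p.1 ∨ c p = p.2

def score (c : Fin n × Fin n → Fin n) (i : Fin n) : ℕ :=
  ((Pr n).filter (fun p => c p = i)).card

def opp (c : Fin n × Fin n → Fin n) (i : Fin n) : Finset (Fin n) :=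
  Finset.univ.filter (fun x => x ≠ i ∧ c (pairOf i x) = i)

lemma score_eq_card_opp {c : Fin n × Fin n → Fin n} (hc : Valid c) (i : Fin n) :
    score c i = (opp c i).card := by
  unfold score opp
  apply Finset.card_bij' (fun p _ => if p.1 = i then p.2 else p.1) (fun x _ => pairOf i x)
  · -- forward membership
    intro p hp
    obtain ⟨hpP, hci⟩ := Finset.mem_filter.1 hp
    have hlt := mem_Pr.1 hpP
    by_cases h1i : p.1 = i
    · rw [if_pos h1i]
      refine Finset.mem_filter.2 ⟨Finset.mem_univ _, fun h => ?_, ?_⟩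
      · rw [h, ← h1i] at hlt; exact lt_irrefl _ hlt
      · have hpe : pairOf i p.2 = p := by rw [← h1i]; exact pairOf_eq_self hlt
        rw [hpe]; exact hci
    · rw [if_neg h1i]
      have h2i : p.2 = i := by
        rcases hc p hpP with h | h
        · exact absurd (h ▸ hci) h1i
        · rw [← h, hci]
      refine Finset.mem_filter.2 ⟨Finset.mem_univ _, fun h => ?_, ?_⟩
      · rw [h, ← h2i] at hlt; exact lt_irrefl _ hlt
      · have hpe : pairOf i p.1 = p := by
          rw [← h2i, pairOf_comm]; exact pairOf_eq_self hlt
        rw [hpe]; exact hci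
  · -- backward membership
    intro x hx
    obtain ⟨-, hxi, hcx⟩ := Finset.mem_filter.1 hx
    exact Finset.mem_filter.2 ⟨pairOf_mem (Ne.symm hxi), hcx⟩
  · -- left inverse
    intro p hp
    obtain ⟨hpP, hci⟩ := Finset.mem_filter.1 hp
    have hlt := mem_Pr.1 hpP
    by_cases h1i : p.1 = i
    · rw [if_pos h1i, ← h1i]; exact pairOf_eq_self hlt
    · rw [if_neg h1i]
      have h2i : p.2 = i := by
        rcases hc p hpP with h | h
        · exact absurd (h ▸ hci) h1i
        · rw [← h, hci]
      rw [← h2i, pairOf_comm]; exact pairOf_eq_self hlt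
  · -- right inverse
    intro x hx
    obtain ⟨-, hxi, -⟩ := Finset.mem_filter.1 hx
    rcases pairOf_cases i x with h | h <;> rw [h]
    · simp
    · simp [hxi]

lemma score_le {c : Fin n × Fin n → Fin n} (hc : Valid c) (i : Fin n) :
    score c i ≤ n - 1 := by
  rw [score_eq_card_opp hc]
  have : opp c i ⊆ Finset.univ.erase i := by
    intro x hx
    obtain ⟨-, hxi, -⟩ := Finset.mem_filter.1 hx
    exact Finset.mem_erase.2 ⟨hxi, Finset.mem_univ _⟩
  calc (opp c i).card ≤ (Finset.univ.erase i).card := Finset.card_le_card this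
    _ = n - 1 := by rw [Finset.card_erase_of_mem (Finset.mem_univ _)]; simp

end PermuZono

namespace PermuZono
variable {n : ℕ}

def pt (c : Fin n × Fin n → Fin n) : EuclideanSpace ℝ (Fin n) :=
  ∑ p ∈ Pr n, stdVec n (c p)

def Phi (c : Fin n × Fin n → Fin n) : ℕ := ∑ i : Fin n, (score c i) ^ 2

lemma pt_apply (c : Fin n × Fin n → Fin n) (i : Fin n) :
    pt c i = (score c i : ℝ) := by
  unfold pt score
  rw [WithLp.ofLp_sum, Finset.sum_apply]
  have h : ∀ p ∈ Pr n, stdVec n (c p) i = if i = c p then (1:ℝ) else 0 := by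
    intro p _; exact EuclideanSpace.single_apply ..
  rw [Finset.sum_congr rfl h, Finset.sum_boole]
  congr 2
  ext p; simp [eq_comm]

lemma pt_update {c : Fin n × Fin n → Fin n} {q : Fin n × Fin n} (hq : q ∈ Pr n) (b : Fin n) :
    pt (Function.update c q b) = pt c - stdVec n (c q) + stdVec n b := by
  unfold pt
  rw [← Finset.add_sum_erase _ _ hq, ← Finset.add_sum_erase _ (fun p => stdVec n (c p)) hq]
  rw [Function.update_self]
  have : ∀ p ∈ (Pr n).erase q, stdVec n (Function.update c q b p) = stdVec n (c p) := by
    intro p hp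
    rw [Function.update_of_ne (Finset.mem_erase.1 hp).1]
  rw [Finset.sum_congr rfl this]
  abel

lemma score_update_same {c : Fin n × Fin n → Fin n} {q : Fin n × Fin n} (hq : q ∈ Pr n)
    {a b : Fin n} (hcq : c q = a) (hba : b ≠ a) :
    score (Function.update c q b) a + 1 = score c a := by
  unfold score
  have hfe : (Pr n).filter (fun p => Function.update c q b p = a)
      = ((Pr n).filter (fun p => c p = a)).erase q := by
    ext p
    by_cases hpq : p = q
    · subst hpq
      simp [Function.update_self, hba, Finset.mem_erase]
    · simp [Function.update_of_ne hpq, Finset.mem_erase, hpq]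
  rw [hfe, Finset.card_erase_add_one]
  exact Finset.mem_filter.2 ⟨hq, hcq⟩

lemma score_update_new {c : Fin n × Fin n → Fin n} {q : Fin n × Fin n} (hq : q ∈ Pr n)
    {a b : Fin n} (hcq : c q = a) (hba : b ≠ a) :
    score (Function.update c q b) b = score c b + 1 := by
  unfold score
  have hfe : (Pr n).filter (fun p => Function.update c q b p = b)
      = insert q ((Pr n).filter (fun p => c p = b)) := by
    ext p
    by_cases hpq : p = q
    · subst hpq
      simp [Function.update_self, hq]
    · simp [Function.update_of_ne hpq, Finset.mem_insert, hpq]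
  rw [hfe, Finset.card_insert_of_notMem]
  intro hmem
  exact hba ((Finset.mem_filter.1 hmem).2 ▸ hcq ▸ rfl)

lemma score_update_other {c : Fin n × Fin n → Fin n} {q : Fin n × Fin n}
    {a b x : Fin n} (hcq : c q = a) (hxa : x ≠ a) (hxb : x ≠ b) :
    score (Function.update c q b) x = score c x := by
  unfold score
  congr 1
  ext p
  by_cases hpq : p = q
  · subst hpq
    simp only [Finset.mem_filter, Function.update_self]
    constructor
    · rintro ⟨h1, rfl⟩; exact absurd rfl hxb
    · rintro ⟨h1, h2⟩; exact absurd (hcq ▸ h2 ▸ rfl : a = x).symm hxa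
  · simp [Function.update_of_ne hpq]

end PermuZono

namespace PermuZono
variable {n : ℕ}

lemma exists_third {c : Fin n × Fin n → Fin n} (hc : Valid c) {i j : Fin n} (hij : i ≠ j)
    (hwin : c (pairOf i j) = i) (hs : score c i ≤ score c j) :
    ∃ k, k ≠ i ∧ k ≠ j ∧ c (pairOf j k) = j ∧ c (pairOf k i) = k := by
  by_contra hcon
  push_neg at hcon
  have hsub : opp c j ⊆ (opp c i).erase j := by
    intro x hx
    obtain ⟨-, hxj, hcx⟩ := Finset.mem_filter.1 hx
    have hxi : x ≠ i := by
      rintro rfl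
      rw [pairOf_comm, hwin] at hcx
      exact hij hcx
    have hne : c (pairOf x i) ≠ x := hcon x hxi hxj hcx
    have hco : c (pairOf x i) = i := by
      rcases eq_or_eq_of_pairOf (hc _ (pairOf_mem hxi)) with h | h
      · exact absurd h hne
      · exact h
    refine Finset.mem_erase.2 ⟨hxj, Finset.mem_filter.2 ⟨Finset.mem_univ _, hxi, ?_⟩⟩
    rw [pairOf_comm]; exact hco
  have hjmem : j ∈ opp c i :=
    Finset.mem_filter.2 ⟨Finset.mem_univ _, hij.symm, hwin⟩
  have h1 : score c j ≤ (opp c i).card - 1 := by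
    rw [score_eq_card_opp hc]
    calc (opp c j).card ≤ ((opp c i).erase j).card := Finset.card_le_card hsub
      _ = (opp c i).card - 1 := Finset.card_erase_of_mem hjmem
  have h2 : 1 ≤ (opp c i).card := Finset.card_pos.2 ⟨j, hjmem⟩
  have h3 : score c i = (opp c i).card := score_eq_card_opp hc i
  omega

lemma sum_split {i j : Fin n} (f : Fin n → ℕ) (hij : i ≠ j) :
    ∑ x : Fin n, f x = f i + f j + ∑ x ∈ (Finset.univ.erase i).erase j, f x := by
  rw [← Finset.add_sum_erase _ f (Finset.mem_univ i),
    ← Finset.add_sum_erase _ f (Finset.mem_erase.2 ⟨hij.symm, Finset.mem_univ j⟩), add_assoc]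

lemma Phi_le {c : Fin n × Fin n → Fin n} (hc : Valid c) : Phi c ≤ n * (n-1)^2 := by
  unfold Phi
  calc ∑ i : Fin n, score c i ^ 2 ≤ ∑ _i : Fin n, (n-1)^2 :=
        Finset.sum_le_sum (fun i _ => Nat.pow_le_pow_left (score_le hc i) 2)
    _ = n * (n-1)^2 := by rw [Finset.sum_const, Finset.card_univ, Fintype.card_fin, smul_eq_mul]

lemma mem_perm_of_choice (hn : 1 ≤ n) :
    ∀ (m : ℕ) (c : Fin n × Fin n → Fin n), Valid c → n * (n-1)^2 + 1 ≤ Phi c + m →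
      pt c + allOnes n ∈ permutohedron n := by
  intro m
  induction m with
  | zero =>
    intro c hc hb
    have := Phi_le hc
    omega
  | succ m ih =>
    intro c hc hb
    by_cases hinj : Function.Injective (score c)
    · -- scores are a permutation: this is a vertex of the permutohedron
      have hlt : ∀ i, score c i < n := fun i => by have := score_le hc i; omega
      have hfinj : Function.Injective (fun i => (⟨score c i, hlt i⟩ : Fin n)) := by
        intro a b hab
        exact hinj (by simpa [Fin.mk.injEq] using hab)
      let σ : Equiv.Perm (Fin n) :=
        Equiv.ofBijective _ (Finite.injective_iff_bijective.1 hfinj)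
      apply subset_convexHull
      refine ⟨σ, fun i => ?_⟩
      have : (pt c + allOnes n) i = pt c i + 1 := by rw [PiLp.add_apply]; rfl
      rw [this, pt_apply]
      rfl
    · -- two indices with equal score
      obtain ⟨a, b, hab, hne⟩ := Function.not_injective_iff.1 hinj
      obtain ⟨i, j, hij, hseq, hwin⟩ :
          ∃ i j, i ≠ j ∧ score c i = score c j ∧ c (pairOf i j) = i := by
        rcases eq_or_eq_of_pairOf (hc _ (pairOf_mem hne)) with h | h
        · exact ⟨a, b, hne, hab, h⟩
        · exact ⟨b, a, hne.symm, hab.symm, by rw [pairOf_comm]; exact h⟩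
      obtain ⟨k, hki, hkj, hjk, hkwin⟩ := exists_third hc hij hwin hseq.le
      have hq1 : pairOf i j ∈ Pr n := pairOf_mem hij
      have hq2 : pairOf j k ∈ Pr n := pairOf_mem (Ne.symm hkj)
      have hq3 : pairOf k i ∈ Pr n := pairOf_mem hki
      have hne12 : pairOf i j ≠ pairOf j k := (pairOf_ne hij hki.symm).symm
      have hne13 : pairOf i j ≠ pairOf k i := pairOf_ne hki hkj
      have hne23 : pairOf j k ≠ pairOf k i := (pairOf_ne hkj.symm hij.symm).symm
      set c1 := Function.update c (pairOf i j) j with hc1def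
      set d := Function.update c (pairOf j k) k with hddef
      set c2 := Function.update d (pairOf k i) i with hc2def
      have hdq3 : d (pairOf k i) = k := by
        rw [hddef, Function.update_of_ne hne23.symm]; exact hkwin
      have hvc1 : Valid c1 := by
        intro p hp
        by_cases hpq : p = pairOf i j
        · subst hpq; rw [hc1def, Function.update_self]; exact snd_mem_pair i j
        · rw [hc1def, Function.update_of_ne hpq]; exact hc p hp
      have hvc2 : Valid c2 := by
        intro p hp
        by_cases hp3 : p = pairOf k i
        · subst hp3; rw [hc2def, Function.update_self]; exact snd_mem_pair k i
        · rw [hc2def, Function.update_of_ne hp3]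
          by_cases hp2 : p = pairOf j k
          · subst hp2; rw [hddef, Function.update_self]; exact snd_mem_pair j k
          · rw [hddef, Function.update_of_ne hp2]; exact hc p hp
      have hpt1 : pt c1 = pt c - stdVec n i + stdVec n j := by
        rw [hc1def, pt_update hq1, hwin]
      have hptd : pt d = pt c - stdVec n j + stdVec n k := by
        rw [hddef, pt_update hq2, hjk]
      have hpt2 : pt c2 = pt c + stdVec n i - stdVec n j := by
        rw [hc2def, pt_update hq3, hdq3, hptd]; abel
      have hsum : pt c1 + pt c2 = pt c + pt c := by
        rw [hpt1, hpt2]; abel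
      -- score bookkeeping
      have hsi1 : score c1 i + 1 = score c i := score_update_same hq1 hwin hij.symm
      have hsj1 : score c1 j = score c j + 1 := score_update_new hq1 hwin hij.symm
      have hother1 : ∀ x, x ≠ i → x ≠ j → score c1 x = score c x :=
        fun x hxi hxj => score_update_other hwin hxi hxj
      have hsjd : score d j + 1 = score c j := score_update_same hq2 hjk hkj
      have hskd : score d k = score c k + 1 := score_update_new hq2 hjk hkj
      have hotherd : ∀ x, x ≠ j → x ≠ k → score d x = score c x :=
        fun x hxj hxk => score_update_other hjk hxj hxk
      have hskc2 : score c2 k + 1 = score d k := score_update_same hq3 hdq3 hki.symm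
      have hsic2 : score c2 i = score d i + 1 := score_update_new hq3 hdq3 hki.symm
      have hotherc2 : ∀ x, x ≠ k → x ≠ i → score c2 x = score d x :=
        fun x hxk hxi => score_update_other hdq3 hxk hxi
      have hsi2 : score c2 i = score c i + 1 := by
        rw [hsic2, hotherd i hij hki.symm]
      have hsj2 : score c2 j + 1 = score c j := by
        rw [hotherc2 j hkj.symm hij.symm]; exact hsjd
      have hsk2 : score c2 k = score c k := by
        have := hskc2; have := hskd; omega
      have hother2 : ∀ x, x ≠ i → x ≠ j → x ≠ k → score c2 x = score c x := by
        intro x hxi hxj hxk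
        rw [hotherc2 x hxk hxi, hotherd x hxj hxk]
      have hPhi1 : Phi c1 = Phi c + 2 := by
        unfold Phi
        rw [sum_split (fun x => score c1 x ^ 2) hij, sum_split (fun x => score c x ^ 2) hij]
        have hR : ∑ x ∈ (Finset.univ.erase i).erase j, score c1 x ^ 2
            = ∑ x ∈ (Finset.univ.erase i).erase j, score c x ^ 2 := by
          refine Finset.sum_congr rfl (fun x hx => ?_)
          obtain ⟨hxj, hxi⟩ := by
            simpa [Finset.mem_erase] using hx
          rw [hother1 x hxi hxj]
        rw [hR]
        have key : score c1 i ^ 2 + score c1 j ^ 2 = score c i ^ 2 + score c j ^ 2 + 2 := by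
          have h1 : score c i = score c1 i + 1 := hsi1.symm
          have h2 : score c1 j = score c1 i + 2 := by omega
          rw [h1, h2, ← hseq, h1]; ring
        omega
      have hPhi2 : Phi c2 = Phi c + 2 := by
        unfold Phi
        rw [sum_split (fun x => score c2 x ^ 2) hij, sum_split (fun x => score c x ^ 2) hij]
        have hR : ∑ x ∈ (Finset.univ.erase i).erase j, score c2 x ^ 2
            = ∑ x ∈ (Finset.univ.erase i).erase j, score c x ^ 2 := by
          refine Finset.sum_congr rfl (fun x hx => ?_)
          obtain ⟨hxj, hxi⟩ := by
            simpa [Finset.mem_erase] using hx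
          by_cases hxk : x = k
          · subst hxk; rw [hsk2]
          · rw [hother2 x hxi hxj hxk]
        rw [hR]
        have key : score c2 i ^ 2 + score c2 j ^ 2 = score c i ^ 2 + score c j ^ 2 + 2 := by
          have h1 : score c2 i = score c2 j + 2 := by omega
          have h2 : score c i = score c2 j + 1 := by omega
          have h3 : score c j = score c2 j + 1 := by omega
          rw [h1, h2, h3]; ring
        omega
      have hm1 : pt c1 + allOnes n ∈ permutohedron n := ih c1 hvc1 (by omega)
      have hm2 : pt c2 + allOnes n ∈ permutohedron n := ih c2 hvc2 (by omega)
      have h2s : pt c1 + allOnes n + (pt c2 + allOnes n) = (2:ℝ) • (pt c + allOnes n) := by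
        calc pt c1 + allOnes n + (pt c2 + allOnes n)
            = (pt c1 + pt c2) + (allOnes n + allOnes n) := by abel
          _ = (pt c + pt c) + (allOnes n + allOnes n) := by rw [hsum]
          _ = (2:ℝ) • (pt c + allOnes n) := by rw [two_smul]; abel
      have veq : pt c + allOnes n
          = (1/2:ℝ) • (pt c1 + allOnes n) + (1/2:ℝ) • (pt c2 + allOnes n) := by
        rw [← smul_add, h2s, smul_smul]; norm_num
      rw [veq]
      exact (convex_convexHull ℝ _) hm1 hm2 (by norm_num) (by norm_num) (by norm_num)
end PermuZono

namespace PermuZono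
variable {n : ℕ}

/-- The choice function associated to a permutation: each pair is won by the
endpoint with larger `σ`-value. -/
def chooseOf (σ : Equiv.Perm (Fin n)) : Fin n × Fin n → Fin n :=
  fun p => if σ p.1 < σ p.2 then p.2 else p.1

lemma valid_chooseOf (σ : Equiv.Perm (Fin n)) : Valid (chooseOf σ) := by
  intro p _
  unfold chooseOf
  split
  · right; rfl
  · left; rfl

lemma score_chooseOf (σ : Equiv.Perm (Fin n)) (i : Fin n) :
    score (chooseOf σ) i = (σ i : ℕ) := by
  rw [score_eq_card_opp (valid_chooseOf σ)]
  have hset : opp (chooseOf σ) i = Finset.univ.filter (fun x => σ x < σ i) := by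
    ext x
    simp only [opp, Finset.mem_filter, Finset.mem_univ, true_and]
    constructor
    · rintro ⟨hxi, hcx⟩
      rcases pairOf_cases i x with h | h <;> rw [h] at hcx <;> unfold chooseOf at hcx <;>
        dsimp at hcx
      · by_cases hlt : σ i < σ x
        · rw [if_pos hlt] at hcx; exact absurd hcx hxi
        · have hne : σ x ≠ σ i := fun he => hxi (σ.injective he)
          exact lt_of_le_of_ne (not_lt.1 hlt) hne
      · by_cases hlt : σ x < σ i
        · exact hlt
        · rw [if_neg hlt] at hcx; exact absurd hcx hxi
    · intro hlt
      have hxi : x ≠ i := fun he => absurd hlt (by rw [he]; exact lt_irrefl _)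
      refine ⟨hxi, ?_⟩
      rcases pairOf_cases i x with h | h <;> rw [h] <;> unfold chooseOf <;> dsimp
      · rw [if_neg (not_lt.2 hlt.le)]
      · rw [if_pos hlt]
  rw [hset]
  have hcard : (Finset.univ.filter (fun x => σ x < σ i)).card
      = (Finset.univ.filter (fun v => v < σ i)).card := by
    apply Finset.card_bij (fun x _ => σ x)
    · intro a ha
      simp only [Finset.mem_filter, Finset.mem_univ, true_and] at ha ⊢
      exact ha
    · intro a _ b _ hab; exact σ.injective hab
    · intro b hb
      simp only [Finset.mem_filter, Finset.mem_univ, true_and] at hb ⊢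
      exact ⟨σ.symm b, by simpa using hb, by simp⟩
  rw [hcard]
  have : Finset.univ.filter (fun v => v < σ i) = Finset.Iio (σ i) := by ext v; simp
  rw [this, Fin.card_Iio]

lemma pt_chooseOf_apply (σ : Equiv.Perm (Fin n)) (i : Fin n) :
    (pt (chooseOf σ) + allOnes n) i = ((σ i : ℕ) : ℝ) + 1 := by
  have : (pt (chooseOf σ) + allOnes n) i = pt (chooseOf σ) i + 1 := by rw [PiLp.add_apply]; rfl
  rw [this, pt_apply, score_chooseOf]

end PermuZono

open PermuZono in
/-- For every `n ≥ 1`, the Minkowski sum of the segments `q_{ij}` over all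
pairs `i < j`, translated by `S = (1,…,1)`, equals the standard permutohedron `Π_n`. -/
theorem permutohedron_eq_sum_segments (n : ℕ) (hn : 1 ≤ n) :
    (∑ p ∈ Finset.univ.filter (fun p : Fin n × Fin n => p.1 < p.2), qseg n p.1 p.2)
      + ({allOnes n} : Set (EuclideanSpace ℝ (Fin n))) = permutohedron n := by
  classical
  have hPr : Finset.univ.filter (fun p : Fin n × Fin n => p.1 < p.2) = Pr n := rfl
  rw [hPr]
  set Q : Set (EuclideanSpace ℝ (Fin n)) :=
    ∑ p ∈ Pr n, ({stdVec n p.1, stdVec n p.2} : Set (EuclideanSpace ℝ (Fin n))) with hQdef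
  have hseg : (∑ p ∈ Pr n, qseg n p.1 p.2) = convexHull ℝ Q := by
    rw [hQdef, convexHull_sum]
    exact Finset.sum_congr rfl (fun p _ => (convexHull_pair _ _).symm)
  have hhull : convexHull ℝ Q + ({allOnes n} : Set (EuclideanSpace ℝ (Fin n)))
      = convexHull ℝ (Q + {allOnes n}) := by
    rw [convexHull_add, convexHull_singleton]
  rw [hseg, hhull]
  -- membership characterization of Q
  have hmemQ : ∀ x ∈ Q, ∃ c, Valid c ∧ pt c = x := by
    intro x hx
    rw [hQdef] at hx
    obtain ⟨g, hg, hgx⟩ := (Set.mem_finset_sum _ _ _).1 hx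
    refine ⟨fun p => if g p = stdVec n p.1 then p.1 else p.2, ?_, ?_⟩
    · intro p _
      dsimp only
      split
      · left; rfl
      · right; rfl
    · rw [← hgx]
      unfold pt
      refine Finset.sum_congr rfl (fun p hp => ?_)
      dsimp only
      rcases hg hp with h | h
      · rw [if_pos h, h]
      · rw [Set.mem_singleton_iff] at h
        by_cases h1 : g p = stdVec n p.1
        · rw [if_pos h1, h1]
        · rw [if_neg h1, h]
  apply Set.Subset.antisymm
  · apply convexHull_min _ (convex_convexHull ℝ _)
    rintro x ⟨q, hq, s, hs, rfl⟩
    rw [Set.mem_singleton_iff] at hs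
    subst hs
    obtain ⟨c, hvc, rfl⟩ := hmemQ q hq
    exact mem_perm_of_choice hn (n * (n-1)^2 + 1) c hvc (by omega)
  · apply convexHull_mono
    rintro x ⟨σ, hx⟩
    have hxeq : x = pt (chooseOf σ) + allOnes n := by
      ext i
      rw [hx i, pt_chooseOf_apply]
    rw [hxeq]
    refine Set.add_mem_add ?_ (Set.mem_singleton _)
    rw [hQdef]
    apply Set.finset_sum_mem_finset_sum
    intro p hp
    rcases valid_chooseOf σ p hp with h | h <;> rw [h]
    · exact Set.mem_insert _ _
    · exact Set.mem_insert_of_mem _ rfl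
end
end

section
/- A face of a face of a convex polytope is again a face of the polytope: if K ⊆ ℝ^n is the convex hull of a nonempty finite set, F = K^ξ for some ξ ∈ ℝ^n, and G = F^η for some η ∈ ℝ^n, then there exists ζ ∈ ℝ^n with G = K^ζ. -/
open scoped Pointwise RealInnerProductSpace BigOperators

noncomputable section

lemma face_hull {n : ℕ} (V : Set (EuclideanSpace ℝ (Fin n))) (hfin : V.Finite)
    (hne : V.Nonempty) (ξ : EuclideanSpace ℝ (Fin n)) :
    face (convexHull ℝ V) ξ = convexHull ℝ {v ∈ V | ∀ w ∈ V, ⟪w, ξ⟫ ≤ ⟪v, ξ⟫} := by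
  obtain ⟨v₀, hv₀V, hv₀max⟩ := Set.exists_max_image V (fun v => ⟪v, ξ⟫) hfin hne
  set M := ⟪v₀, ξ⟫ with hM
  have hlin : IsLinearMap ℝ (fun x : EuclideanSpace ℝ (Fin n) => ⟪x, ξ⟫) :=
    ⟨fun x y => inner_add_left x y ξ, fun c x => real_inner_smul_left x ξ c⟩
  have hle : ∀ x ∈ convexHull ℝ V, ⟪x, ξ⟫ ≤ M :=
    fun x hx => convexHull_min (fun v hv => hv₀max v hv) (convex_halfSpace_le hlin M) hx
  set A := {v ∈ V | ∀ w ∈ V, ⟪w, ξ⟫ ≤ ⟪v, ξ⟫} with hA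
  have hAsub : A ⊆ V := fun v hv => hv.1
  have hAM : ∀ v ∈ A, ⟪v, ξ⟫ = M :=
    fun v hv => le_antisymm (hv₀max v hv.1) (hv.2 v₀ hv₀V)
  ext x
  constructor
  · rintro ⟨hxK, hxmax⟩
    have hxM : ⟪x, ξ⟫ = M :=
      le_antisymm (hle x hxK) (hxmax v₀ (subset_convexHull ℝ V hv₀V))
    have hx' : x ∈ convexHull ℝ (hfin.toFinset : Set (EuclideanSpace ℝ (Fin n))) := by
      rwa [Set.Finite.coe_toFinset]
    rw [Finset.convexHull_eq] at hx'
    obtain ⟨w, hw0, hw1, hwx⟩ := hx'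
    have hxs : x = ∑ y ∈ hfin.toFinset, w y • y := by
      rw [← hwx, Finset.centerMass_eq_of_sum_1 _ _ hw1]; simp
    have hinner : ⟪x, ξ⟫ = ∑ y ∈ hfin.toFinset, w y * ⟪y, ξ⟫ := by
      rw [hxs, sum_inner]
      exact Finset.sum_congr rfl fun y _ => real_inner_smul_left y ξ (w y)
    have hsum0 : ∑ y ∈ hfin.toFinset, w y * (M - ⟪y, ξ⟫) = 0 := by
      have : ∑ y ∈ hfin.toFinset, w y * (M - ⟪y, ξ⟫)
          = M * (∑ y ∈ hfin.toFinset, w y) - ∑ y ∈ hfin.toFinset, w y * ⟪y, ξ⟫ := by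
        rw [Finset.mul_sum, ← Finset.sum_sub_distrib]
        exact Finset.sum_congr rfl fun y _ => by ring
      rw [this, hw1, ← hinner, hxM]; ring
    have key : ∀ y ∈ hfin.toFinset, w y * (M - ⟪y, ξ⟫) = 0 :=
      (Finset.sum_eq_zero_iff_of_nonneg (fun y hy =>
        mul_nonneg (hw0 y hy) (sub_nonneg.mpr (hv₀max y (hfin.mem_toFinset.mp hy))))).mp hsum0
    rw [← hwx, ← Finset.centerMass_filter_ne_zero]
    apply Finset.centerMass_mem_convexHull
    · intro i hi; exact hw0 i (Finset.mem_filter.mp hi).1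
    · rw [Finset.sum_filter_ne_zero, hw1]; norm_num
    · intro i hi
      obtain ⟨hiF, hwi⟩ := Finset.mem_filter.mp hi
      have h0 := key i hiF
      have hiM : ⟪i, ξ⟫ = M := by
        rcases mul_eq_zero.mp h0 with h | h
        · exact absurd h hwi
        · linarith
      exact ⟨hfin.mem_toFinset.mp hiF, fun w' hw' => hiM ▸ hv₀max w' hw'⟩
  · intro hx
    have hxK : x ∈ convexHull ℝ V := convexHull_mono hAsub hx
    have hxM : ⟪x, ξ⟫ = M := by
      have hge : M ≤ ⟪x, ξ⟫ :=
        convexHull_min (fun v hv => (hAM v hv).ge) (convex_halfSpace_ge hlin M) hx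
      exact le_antisymm (hle x hxK) hge
    exact ⟨hxK, fun y hy => hxM ▸ hle y hy⟩

/-- A face of a face of a convex polytope is again a face of the polytope. -/
theorem face_face (n : ℕ) (V : Set (EuclideanSpace ℝ (Fin n)))
    (hVfin : V.Finite) (hVne : V.Nonempty)
    (K F G : Set (EuclideanSpace ℝ (Fin n))) (hK : K = convexHull ℝ V)
    (ξ : EuclideanSpace ℝ (Fin n)) (hF : F = face K ξ)
    (η : EuclideanSpace ℝ (Fin n)) (hG : G = face F η) :
    ∃ ζ : EuclideanSpace ℝ (Fin n), G = face K ζ := by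
  subst hK hF hG
  set A₁ := {v ∈ V | ∀ w ∈ V, ⟪w, ξ⟫ ≤ ⟪v, ξ⟫} with hA₁def
  have hA₁sub : A₁ ⊆ V := fun v hv => hv.1
  have hA₁fin : A₁.Finite := hVfin.subset hA₁sub
  obtain ⟨v₁, hv₁V, hv₁max⟩ := Set.exists_max_image V (fun v => ⟪v, ξ⟫) hVfin hVne
  have hv₁ : v₁ ∈ A₁ := ⟨hv₁V, hv₁max⟩
  have hA₁ne : A₁.Nonempty := ⟨v₁, hv₁⟩
  set M := ⟪v₁, ξ⟫ with hMdef
  have hA₁M : ∀ v ∈ A₁, ⟪v, ξ⟫ = M := fun v hv =>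
    le_antisymm (hv₁max v hv.1) (hv.2 v₁ hv₁V)
  set A₂ := {v ∈ A₁ | ∀ w ∈ A₁, ⟪w, η⟫ ≤ ⟪v, η⟫} with hA₂def
  obtain ⟨v₂, hv₂A₁, hv₂max⟩ := Set.exists_max_image A₁ (fun v => ⟪v, η⟫) hA₁fin hA₁ne
  have hv₂ : v₂ ∈ A₂ := ⟨hv₂A₁, hv₂max⟩
  set N := ⟪v₂, η⟫ with hNdef
  have hηN : ∀ v ∈ A₁, ⟪v, η⟫ ≤ N := fun v hv => hv₂max v hv
  have hF' : face (convexHull ℝ V) ξ = convexHull ℝ A₁ := face_hull V hVfin hVne ξ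
  have hG' : face (convexHull ℝ A₁) η = convexHull ℝ A₂ := face_hull A₁ hA₁fin hA₁ne η
  -- choose ε
  obtain ⟨ε, hε, hεB⟩ : ∃ ε : ℝ, 0 < ε ∧
      ∀ v ∈ V, v ∉ A₁ → ⟪v, ξ⟫ + ε * ⟪v, η⟫ < M + ε * N := by
    obtain ⟨v₃, hv₃V, hv₃max⟩ := Set.exists_max_image V (fun v => ⟪v, η⟫) hVfin hVne
    set C := ⟪v₃, η⟫ - N + 1 with hCdef
    have hC1 : 1 ≤ C := by
      have := hv₃max v₂ hv₂A₁.1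
      simp only [hCdef]; linarith
    by_cases hB : (V \ A₁).Nonempty
    · obtain ⟨b₀, hb₀, hb₀min⟩ := Set.exists_min_image (V \ A₁) (fun v => M - ⟪v, ξ⟫)
        (hVfin.subset Set.diff_subset) hB
      set δ := M - ⟪b₀, ξ⟫ with hδdef
      have hδpos : 0 < δ := by
        have hb₀V : b₀ ∈ V := hb₀.1
        have : ¬ ∀ w ∈ V, ⟪w, ξ⟫ ≤ ⟪b₀, ξ⟫ := fun h => hb₀.2 ⟨hb₀V, h⟩
        push_neg at this
        obtain ⟨w, hwV, hw⟩ := this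
        have := hv₁max w hwV
        simp only [hδdef]; linarith
      refine ⟨δ / C, div_pos hδpos (by linarith), fun v hvV hvA₁ => ?_⟩
      have h1 : ⟪v, η⟫ - N ≤ C - 1 := by
        have := hv₃max v hvV
        simp only [hCdef]; linarith
      have h2 : δ ≤ M - ⟪v, ξ⟫ := hb₀min v ⟨hvV, hvA₁⟩
      have hεC : (δ / C) * C = δ := div_mul_cancel₀ δ (by linarith)
      have hεpos : 0 < δ / C := div_pos hδpos (by linarith)
      nlinarith [mul_le_mul_of_nonneg_left h1 (le_of_lt hεpos)]
    · exact ⟨1, one_pos, fun v hvV hvA₁ => absurd ⟨v, hvV, hvA₁⟩ hB⟩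
  set ζ := ξ + ε • η with hζdef
  have hζv : ∀ v : EuclideanSpace ℝ (Fin n), ⟪v, ζ⟫ = ⟪v, ξ⟫ + ε * ⟪v, η⟫ := by
    intro v
    rw [hζdef, inner_add_right, real_inner_smul_right]
  have hmaxζ : ∀ w ∈ V, ⟪w, ζ⟫ ≤ M + ε * N := by
    intro w hwV
    rw [hζv]
    by_cases hw : w ∈ A₁
    · have h1 := hA₁M w hw
      have h2 := hηN w hw
      nlinarith
    · exact le_of_lt (hεB w hwV hw)
  have hv₂ζ : ⟪v₂, ζ⟫ = M + ε * N := by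
    rw [hζv, hA₁M v₂ hv₂A₁]
  have hset : {v ∈ V | ∀ w ∈ V, ⟪w, ζ⟫ ≤ ⟪v, ζ⟫} = A₂ := by
    ext v
    constructor
    · rintro ⟨hvV, hvmax⟩
      have hge : M + ε * N ≤ ⟪v, ζ⟫ := hv₂ζ ▸ hvmax v₂ hv₂A₁.1
      have hvA₁ : v ∈ A₁ := by
        by_contra hno
        have := hεB v hvV hno
        rw [hζv] at hge
        linarith
      have hvN : N ≤ ⟪v, η⟫ := by
        rw [hζv, hA₁M v hvA₁] at hge
        nlinarith
      exact ⟨hvA₁, fun w hw => le_trans (hηN w hw) hvN⟩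
    · rintro ⟨hvA₁, hvmax⟩
      refine ⟨hvA₁.1, fun w hw => ?_⟩
      have hvN : ⟪v, η⟫ = N := le_antisymm (hηN v hvA₁) (hvmax v₂ hv₂A₁)
      have h2 : ⟪v, ζ⟫ = M + ε * N := by rw [hζv v, hA₁M v hvA₁, hvN]
      rw [h2]
      exact hmaxζ w hw
  refine ⟨ζ, ?_⟩
  rw [hF', hG', face_hull V hVfin hVne ζ, hset]
end
end

section
/- Let n ≥ 3 and let ξ = (x_1,…,x_n) ∈ ℝ^n satisfy x_1 > x_2 > ⋯ > x_n, and let 1 ≤ k ≤ n−1 satisfy x_k > (x_1 + ⋯ + x_n)/n > x_{k+1}. Then the face Π_n^ξ is the single vertex u = (n, n−1, …, 1), the face of each segment r_i in direction ξ is {R_i} for i ≤ k and {0} for i > k, and the point u − Σ_{i=1}^{k} R_i is again a vertex of Π_n, namely the point whose j-th coordinate equals k + 1 − j for j ≤ k and n + k + 1 − j for j > k. -/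
open scoped Pointwise RealInnerProductSpace BigOperators

noncomputable section

/-- The vertex `u = (n, n−1, …, 2, 1)` of the permutohedron. -/
def decVertex (n : ℕ) : EuclideanSpace ℝ (Fin n) := WithLp.toLp 2 (fun j => (n : ℝ) - (j : ℕ))

/-- The point whose `j`-th coordinate (1-indexed) is `k + 1 − j` for `j ≤ k` and
`n + k + 1 − j` for `j > k`. -/
def shiftVertex (n k : ℕ) : EuclideanSpace ℝ (Fin n) :=
  WithLp.toLp 2 (fun j => if (j : ℕ) + 1 ≤ k then (k : ℝ) - (j : ℕ) else (n : ℝ) + k - (j : ℕ))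

/- ### Auxiliary lemmas -/

lemma inner_pi {n : ℕ} (x y : EuclideanSpace ℝ (Fin n)) : ⟪x, y⟫ = ∑ j, x j * y j := by
  simp [PiLp.inner_apply, RCLike.inner_apply, starRingEnd_apply]
  exact Finset.sum_congr rfl fun _ _ => mul_comm _ _

lemma mem_seg_iff {n : ℕ} {R x : EuclideanSpace ℝ (Fin n)} :
    x ∈ segment ℝ 0 R ↔ ∃ t : ℝ, 0 ≤ t ∧ t ≤ 1 ∧ x = t • R := by
  rw [segment_eq_image]
  constructor
  · rintro ⟨t, ⟨h0, h1⟩, rfl⟩; exact ⟨t, h0, h1, by simp⟩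
  · rintro ⟨t, h0, h1, rfl⟩; exact ⟨t, ⟨h0, h1⟩, by simp⟩

lemma face_seg_pos {n : ℕ} {R ξ : EuclideanSpace ℝ (Fin n)} (h : 0 < ⟪R, ξ⟫) :
    face (segment ℝ 0 R) ξ = {R} := by
  ext x
  simp only [face, Set.mem_setOf_eq, Set.mem_singleton_iff]
  constructor
  · rintro ⟨hx, hmax⟩
    obtain ⟨t, h0, h1, rfl⟩ := mem_seg_iff.1 hx
    have hR : ⟪R, ξ⟫ ≤ ⟪t • R, ξ⟫ := hmax R (right_mem_segment ℝ 0 R)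
    rw [real_inner_smul_left] at hR
    have ht : t = 1 := by nlinarith
    rw [ht, one_smul]
  · intro hx
    rw [hx]
    refine ⟨right_mem_segment ℝ 0 R, fun y hy => ?_⟩
    obtain ⟨t, h0, h1, rfl⟩ := mem_seg_iff.1 hy
    rw [real_inner_smul_left]
    nlinarith

lemma face_seg_neg {n : ℕ} {R ξ : EuclideanSpace ℝ (Fin n)} (h : ⟪R, ξ⟫ < 0) :
    face (segment ℝ 0 R) ξ = {0} := by
  ext x
  simp only [face, Set.mem_setOf_eq, Set.mem_singleton_iff]
  constructor
  · rintro ⟨hx, hmax⟩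
    obtain ⟨t, h0, h1, rfl⟩ := mem_seg_iff.1 hx
    have hR : ⟪(0 : EuclideanSpace ℝ (Fin n)), ξ⟫ ≤ ⟪t • R, ξ⟫ :=
      hmax 0 (left_mem_segment ℝ 0 R)
    rw [real_inner_smul_left, inner_zero_left] at hR
    have ht : t = 0 := by nlinarith
    rw [ht, zero_smul]
  · intro hx
    rw [hx]
    refine ⟨left_mem_segment ℝ 0 R, fun y hy => ?_⟩
    obtain ⟨t, h0, h1, rfl⟩ := mem_seg_iff.1 hy
    rw [real_inner_smul_left, inner_zero_left]
    nlinarith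

lemma inner_Rpt {n : ℕ} (i : Fin n) (ξ : EuclideanSpace ℝ (Fin n)) :
    ⟪Rpt n i, ξ⟫ = (n : ℝ) * ξ i - ∑ j, ξ j := by
  rw [Rpt, inner_sub_left, real_inner_smul_left, stdVec,
    EuclideanSpace.inner_single_left, inner_pi]
  simp [allOnes]

/-- For `n ≥ 3`, `ξ` with strictly decreasing coordinates and `1 ≤ k ≤ n−1`
with `ξ_k > (ξ_1 + ⋯ + ξ_n)/n > ξ_{k+1}` (1-indexed): the face of `Π_n` in direction `ξ`
is the single vertex `u = (n, n−1, …, 1)`; the face of `r_i` is `{R_i}` for `i ≤ k` and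
`{0}` for `i > k`; and `u − Σ_{i ≤ k} R_i` is the vertex of `Π_n` whose `j`-th coordinate
(1-indexed) is `k + 1 − j` for `j ≤ k` and `n + k + 1 − j` for `j > k`. -/
theorem face_cyclopermutohedron_vertex (n : ℕ) (hn : 3 ≤ n)
    (ξ : EuclideanSpace ℝ (Fin n))
    (hdec : ∀ i j : Fin n, i < j → ξ j < ξ i)
    (k : ℕ) (hk1 : 1 ≤ k) (hk2 : k ≤ n - 1)
    (hka : (∑ j, ξ j) / n < ξ ⟨k - 1, by omega⟩)
    (hkb : ξ ⟨k, by omega⟩ < (∑ j, ξ j) / n) :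
    face (permutohedron n) ξ = {decVertex n} ∧
      (∀ i : Fin n, ((i : ℕ) + 1 ≤ k → face (rseg n i) ξ = {Rpt n i}) ∧
        (k < (i : ℕ) + 1 → face (rseg n i) ξ = {0})) ∧
      decVertex n - ∑ i ∈ Finset.univ.filter (fun i : Fin n => (i : ℕ) + 1 ≤ k), Rpt n i
        = shiftVertex n k ∧
      (∃ σ : Equiv.Perm (Fin n), ∀ j : Fin n, shiftVertex n k j = ((σ j : ℕ) : ℝ) + 1) := by
  have hnpos : (0 : ℝ) < n := by positivity
  set V : Set (EuclideanSpace ℝ (Fin n)) :=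
    {x | ∃ σ : Equiv.Perm (Fin n), ∀ i, x i = ((σ i : ℕ) : ℝ) + 1} with hV
  set u := decVertex n with hu
  -- u ∈ V
  have huV : u ∈ V := by
    refine ⟨Fin.revPerm, fun j => ?_⟩
    have : ((Fin.rev j : Fin n) : ℕ) = n - (j + 1) := Fin.val_rev j
    have hj : (j : ℕ) + 1 ≤ n := j.isLt
    simp only [hu, decVertex, Fin.revPerm_apply, this]
    push_cast [Nat.cast_sub hj]
    ring
  -- monovariance
  have hfmono : Monovary (decVertex n) ξ := by
    intro i j hij
    rcases lt_trichotomy i j with h | h | h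
    · exact absurd (hdec i j h) (not_lt.2 hij.le)
    · exact le_of_eq (by rw [h])
    · have : (j : ℕ) < (i : ℕ) := h
      simp only [decVertex]
      have : ((j : ℕ) : ℝ) < ((i : ℕ) : ℝ) := by exact_mod_cast this
      linarith
  -- key bound on V
  have key : ∀ x ∈ V, ⟪x, ξ⟫ ≤ ⟪u, ξ⟫ ∧ (x ≠ u → ⟪x, ξ⟫ < ⟪u, ξ⟫) := by
    rintro x ⟨σ, hσ⟩
    set τ : Equiv.Perm (Fin n) := σ.trans Fin.revPerm with hτ
    have hxτ : ∀ j, x j = decVertex n (τ j) := by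
      intro j
      have h1 : ((Fin.rev (σ j) : Fin n) : ℕ) = n - ((σ j : ℕ) + 1) := Fin.val_rev _
      have h2 : ((σ j : ℕ)) + 1 ≤ n := (σ j).isLt
      rw [hσ j]
      simp only [hτ, decVertex, Equiv.trans_apply, Fin.revPerm_apply, h1]
      push_cast [Nat.cast_sub h2]
      ring
    have hinner : ⟪x, ξ⟫ = ∑ j, decVertex n (τ j) • ξ j := by
      rw [inner_pi]
      exact Finset.sum_congr rfl fun j _ => by rw [hxτ j, smul_eq_mul]
    have hinneru : ⟪u, ξ⟫ = ∑ j, decVertex n j • ξ j := by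
      rw [inner_pi]
      exact Finset.sum_congr rfl fun j _ => rfl
    constructor
    · rw [hinner, hinneru]
      exact hfmono.sum_comp_perm_smul_le_sum_smul
    · intro hne
      rw [hinner, hinneru, hfmono.sum_comp_perm_smul_lt_sum_smul_iff]
      intro hmono
      -- hmono : Monovary (decVertex n ∘ τ) ξ ⇒ τ = id ⇒ x = u
      have hmonot : Monotone τ := by
        intro a b hab
        rcases eq_or_lt_of_le hab with rfl | h
        · exact le_rfl
        · have hx : ξ b < ξ a := hdec a b h
          have := hmono hx
          simp only [Function.comp, decVertex] at this
          have : ((τ a : ℕ) : ℝ) ≤ ((τ b : ℕ) : ℝ) := by linarith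
          exact_mod_cast this
      have hsm : StrictMono τ := hmonot.strictMono_of_injective τ.injective
      have hid : (τ : Fin n → Fin n) = id :=
        (hsm.range_inj strictMono_id).1
          (by simp [Set.range_id, Equiv.range_eq_univ])
      apply hne
      ext j
      have : τ j = j := congrFun hid j
      rw [hxτ j, this]
  -- max over the hull
  have hlin : IsLinearMap ℝ (fun w : EuclideanSpace ℝ (Fin n) => ⟪w, ξ⟫) :=
    ⟨fun a b => inner_add_left a b ξ, fun c a => real_inner_smul_left a ξ c⟩
  have hhull : ∀ y ∈ permutohedron n, ⟪y, ξ⟫ ≤ ⟪u, ξ⟫ := by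
    intro y hy
    exact convexHull_min (fun x hx => (key x hx).1) (convex_halfSpace_le hlin _) hy
  have huhull : u ∈ permutohedron n := subset_convexHull ℝ _ huV
  -- Part 1
  have part1 : face (permutohedron n) ξ = {u} := by
    apply Set.Subset.antisymm
    · rintro x ⟨hx, hmax⟩
      have hxin : ⟪x, ξ⟫ = ⟪u, ξ⟫ := le_antisymm (hhull x hx) (hmax u huhull)
      rw [permutohedron, convexHull_eq] at hx
      obtain ⟨ι, t, w, z, hw0, hw1, hz, hcm⟩ := hx
      have hxsum : x = ∑ i ∈ t, w i • z i := by
        rw [← hcm, Finset.centerMass_eq_of_sum_1 _ _ hw1]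
      have hsum : ∑ i ∈ t, w i * ⟪z i, ξ⟫ = ⟪u, ξ⟫ := by
        rw [← hxin, hxsum, sum_inner]
        exact Finset.sum_congr rfl fun i _ => (real_inner_smul_left _ _ _).symm
      have hall : ∀ i ∈ t, w i ≠ 0 → z i = u := by
        by_contra hcon
        push_neg at hcon
        obtain ⟨i0, hi0, hwi0, hzi0⟩ := hcon
        have hwpos : 0 < w i0 := lt_of_le_of_ne (hw0 i0 hi0) (Ne.symm hwi0)
        have hlt : ∑ i ∈ t, w i * ⟪z i, ξ⟫ < ∑ i ∈ t, w i * ⟪u, ξ⟫ := by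
          refine Finset.sum_lt_sum
            (fun i hi => mul_le_mul_of_nonneg_left (key _ (hz i hi)).1 (hw0 i hi))
            ⟨i0, hi0, mul_lt_mul_of_pos_left ((key _ (hz i0 hi0)).2 hzi0) hwpos⟩
        rw [← Finset.sum_mul, hw1, one_mul, hsum] at hlt
        exact lt_irrefl _ hlt
      rw [hxsum]
      have : ∀ i ∈ t, w i • z i = w i • u := by
        intro i hi
        by_cases hwi : w i = 0
        · rw [hwi, zero_smul, zero_smul]
        · rw [hall i hi hwi]
      rw [Finset.sum_congr rfl this, ← Finset.sum_smul, hw1, one_smul]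
      rfl
    · rintro x rfl
      exact ⟨huhull, fun y hy => hhull y hy⟩
  -- inner products with the R_i
  have hS : ∀ i : Fin n, (i : ℕ) + 1 ≤ k → 0 < ⟪Rpt n i, ξ⟫ := by
    intro i hi
    rw [inner_Rpt]
    have hle : ξ ⟨k - 1, by omega⟩ ≤ ξ i := by
      rcases lt_or_eq_of_le (Nat.le_sub_one_of_lt hi : (i : ℕ) ≤ k - 1) with h | h
      · exact le_of_lt (hdec i ⟨k - 1, by omega⟩ h)
      · exact le_of_eq (congrArg ξ (Fin.ext h.symm))
    have : (∑ j, ξ j) / n < ξ i := lt_of_lt_of_le hka hle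
    rw [div_lt_iff₀ hnpos] at this
    linarith
  have hS' : ∀ i : Fin n, k < (i : ℕ) + 1 → ⟪Rpt n i, ξ⟫ < 0 := by
    intro i hi
    rw [inner_Rpt]
    have hle : ξ i ≤ ξ ⟨k, by omega⟩ := by
      rcases lt_or_eq_of_le (Nat.lt_succ_iff.1 hi : k ≤ (i : ℕ)) with h | h
      · exact le_of_lt (hdec ⟨k, by omega⟩ i h)
      · exact le_of_eq (congrArg ξ (Fin.ext h.symm))
    have : ξ i < (∑ j, ξ j) / n := lt_of_le_of_lt hle hkb
    rw [lt_div_iff₀ hnpos] at this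
    linarith
  refine ⟨part1, fun i => ⟨fun hi => face_seg_pos (hS i hi), fun hi => face_seg_neg (hS' i hi)⟩,
    ?_, ?_⟩
  -- Part 3
  · ext j
    set t := Finset.univ.filter (fun i : Fin n => (i : ℕ) + 1 ≤ k) with ht
    have hcard : t.card = k := by
      have : t = (Finset.range k).attachFin
          (fun m hm => lt_of_lt_of_le (Finset.mem_range.1 hm) (by omega)) := by
        ext i
        simp [ht, Finset.mem_attachFin]
      rw [this, Finset.card_attachFin, Finset.card_range]
    have happly : (decVertex n - ∑ i ∈ t, Rpt n i) j
        = decVertex n j - ∑ i ∈ t, Rpt n i j := by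
      rw [PiLp.sub_apply]
      congr 1
      rw [WithLp.ofLp_sum]
      exact Finset.sum_apply j t _
    have hRptj : ∀ i : Fin n, Rpt n i j = (n : ℝ) * (if j = i then 1 else 0) - 1 := by
      intro i
      simp [Rpt, stdVec, allOnes, EuclideanSpace.single_apply, PiLp.sub_apply, PiLp.smul_apply,
        smul_eq_mul]
    have hsum : ∑ i ∈ t, Rpt n i j = (n : ℝ) * (if j ∈ t then 1 else 0) - k := by
      rw [Finset.sum_congr rfl fun i _ => hRptj i, Finset.sum_sub_distrib, ← Finset.mul_sum,
        Finset.sum_ite_eq]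
      simp [hcard]
    rw [happly, hsum]
    by_cases hj : (j : ℕ) + 1 ≤ k
    · have hjt : j ∈ t := by simp [ht]; omega
      simp only [shiftVertex, hj, if_true, hjt, decVertex]
      ring
    · have hjt : j ∉ t := by simp [ht]; omega
      simp only [shiftVertex, hj, if_false, hjt, decVertex]
      ring
  -- Part 4
  · have hinv : Function.Involutive (fun j : Fin n =>
        if h : (j : ℕ) < k then (⟨k - 1 - j, by omega⟩ : Fin n)
        else ⟨n + k - 1 - j, by have := j.isLt; omega⟩) := by
      intro j
      have hjn := j.isLt
      by_cases hj : (j : ℕ) < k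
      · simp only [dif_pos hj, dif_pos (show k - 1 - (j : ℕ) < k by omega)]
        exact Fin.ext (by simp; omega)
      · simp only [dif_neg hj, dif_neg (show ¬ n + k - 1 - (j : ℕ) < k by omega)]
        exact Fin.ext (by simp; omega)
    refine ⟨hinv.toPerm _, fun j => ?_⟩
    by_cases hj : (j : ℕ) + 1 ≤ k
    · have hj' : (j : ℕ) < k := hj
      simp only [shiftVertex, hj, if_true, Function.Involutive.coe_toPerm, dif_pos hj']
      have : ((k - 1 - (j : ℕ) : ℕ) : ℝ) = k - 1 - j := by
        push_cast [Nat.cast_sub (by omega : (j:ℕ) ≤ k - 1), Nat.cast_sub (by omega : 1 ≤ k)]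
        ring
      rw [this]
      ring
    · have hj' : ¬ (j : ℕ) < k := fun h => hj h
      simp only [shiftVertex, hj, if_false, Function.Involutive.coe_toPerm, dif_neg hj']
      have hjn : (j : ℕ) ≤ n + k - 1 := by omega
      have : ((n + k - 1 - (j : ℕ) : ℕ) : ℝ) = n + k - 1 - j := by
        push_cast [Nat.cast_sub hjn, Nat.cast_sub (by omega : 1 ≤ n + k)]
        ring
      rw [this]
      ring
end
end

section
/- Every vertex of the permutohedron arises as a vertex of the cyclopermutohedron: for n ≥ 3 and every point v ∈ ℝ^n whose coordinates are a permutation of (1, 2, …, n), there exists ξ ∈ ℝ^n with pairwise distinct coordinates satisfying n·ξ_i ≠ ξ_1 + ⋯ + ξ_n for every i, such that Π_n^ξ is a singleton {u} and u − Σ_{i : n·ξ_i > ξ_1 + ⋯ + ξ_n} R_i = v. -/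
open scoped Pointwise RealInnerProductSpace BigOperators

noncomputable section

/-- Strict rearrangement inequality: for a strictly monotone weight vector `c` and any
nontrivial permutation `ρ`, the permuted sum is strictly smaller. -/
lemma rearr (N : ℕ) (c : Fin N → ℝ) (hc : StrictMono c) (ρ : Equiv.Perm (Fin N)) (hρ : ρ ≠ 1) :
    ∑ i, c i * ((ρ i : ℕ) : ℝ) < ∑ i, c i * ((i : ℕ) : ℝ) := by
  have hmono : Monovary c (fun i : Fin N => ((i : ℕ) : ℝ)) := by
    intro i j hij
    have : (i : ℕ) < (j : ℕ) := by simpa using hij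
    exact (hc.le_iff_le).2 (le_of_lt this)
  rw [hmono.sum_mul_comp_perm_lt_sum_mul_iff (σ := ρ)]
  intro h
  apply hρ
  have hsm : StrictMono (⇑ρ⁻¹) := by
    intro a b hab
    have h2 : ρ (ρ⁻¹ a) < ρ (ρ⁻¹ b) := by simpa using hab
    have h3 : ((ρ (ρ⁻¹ a) : ℕ) : ℝ) < ((ρ (ρ⁻¹ b) : ℕ) : ℝ) := by exact_mod_cast h2
    have h4 : c (ρ⁻¹ a) ≤ c (ρ⁻¹ b) := h h3
    have h5 : ρ⁻¹ a ≤ ρ⁻¹ b := (hc.le_iff_le).1 h4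
    rcases lt_or_eq_of_le h5 with h6 | h6
    · exact h6
    · exact absurd ((Equiv.apply_eq_iff_eq ρ⁻¹).1 h6) (ne_of_lt hab)
  have he : ∀ x, (ρ⁻¹ : Equiv.Perm (Fin N)) x = x := by
    intro x
    have := Subsingleton.elim (StrictMono.orderIsoOfSurjective _ hsm (ρ⁻¹).surjective)
      (OrderIso.refl (Fin N))
    have hx := congrArg (fun f : Fin N ≃o Fin N => f x) this
    simpa using hx
  refine Equiv.ext fun x => ?_
  have := he (ρ x)
  simp only [← Equiv.Perm.mul_apply, inv_mul_cancel, Equiv.Perm.one_apply] at this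
  simpa using this.symm

/-- If `u ∈ S` strictly maximizes `⟪·, ξ⟫` over `S`, then the face of `convexHull ℝ S` in
direction `ξ` is the singleton `{u}`. -/
lemma face_singleton {n : ℕ} (S : Set (EuclideanSpace ℝ (Fin n)))
    (u ξ : EuclideanSpace ℝ (Fin n)) (hu : u ∈ S)
    (hlt : ∀ y ∈ S, y ≠ u → ⟪y, ξ⟫ < ⟪u, ξ⟫) :
    face (convexHull ℝ S) ξ = {u} := by
  have hle : ∀ y ∈ S, ⟪y, ξ⟫ ≤ ⟪u, ξ⟫ := by
    intro y hy
    by_cases h : y = u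
    · rw [h]
    · exact (hlt y hy h).le
  have hlin : IsLinearMap ℝ (fun x : EuclideanSpace ℝ (Fin n) => ⟪x, ξ⟫) :=
    ⟨fun a b => inner_add_left a b ξ, fun r a => real_inner_smul_left a ξ r⟩
  have hhull : ∀ x ∈ convexHull ℝ S, ⟪x, ξ⟫ ≤ ⟪u, ξ⟫ := by
    intro x hx
    have : convexHull ℝ S ⊆ {x | ⟪x, ξ⟫ ≤ ⟪u, ξ⟫} :=
      convexHull_min hle (convex_halfSpace_le hlin _)
    exact this hx
  have huh : u ∈ convexHull ℝ S := subset_convexHull ℝ S hu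
  ext x
  simp only [Set.mem_singleton_iff, face, Set.mem_setOf_eq, Set.mem_sep_iff]
  constructor
  · rintro ⟨hxh, hmax⟩
    have hxe : ⟪u, ξ⟫ ≤ ⟪x, ξ⟫ := hmax u huh
    rw [convexHull_eq] at hxh
    obtain ⟨ι, t, w, z, hw0, hw1, hzS, hcm⟩ := hxh
    have hx : x = ∑ i ∈ t, w i • z i := by
      rw [← hcm, Finset.centerMass_eq_of_sum_1 _ _ hw1]
    have hfx : ⟪x, ξ⟫ = ∑ i ∈ t, w i * ⟪z i, ξ⟫ := by
      rw [hx, sum_inner]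
      exact Finset.sum_congr rfl fun i _ => real_inner_smul_left _ _ _
    have hpt : ∀ i ∈ t, w i * ⟪z i, ξ⟫ ≤ w i * ⟪u, ξ⟫ := fun i hi =>
      mul_le_mul_of_nonneg_left (hle _ (hzS i hi)) (hw0 i hi)
    have hsum_ge : ∑ i ∈ t, w i * ⟪u, ξ⟫ ≤ ∑ i ∈ t, w i * ⟪z i, ξ⟫ := by
      rw [← Finset.sum_mul, hw1, one_mul, ← hfx]
      exact hxe
    have heq : ∀ i ∈ t, w i * ⟪z i, ξ⟫ = w i * ⟪u, ξ⟫ :=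
      (Finset.sum_eq_sum_iff_of_le hpt).1 (le_antisymm (Finset.sum_le_sum hpt) hsum_ge)
    have hzu : ∀ i ∈ t, w i • z i = w i • u := by
      intro i hi
      by_cases hwz : w i = 0
      · simp [hwz]
      · have : ⟪z i, ξ⟫ = ⟪u, ξ⟫ := mul_left_cancel₀ hwz (heq i hi)
        have hz : z i = u := by
          by_contra hne
          exact absurd this (ne_of_lt (hlt _ (hzS i hi) hne))
        rw [hz]
    rw [hx, Finset.sum_congr rfl hzu, ← Finset.sum_smul, hw1, one_smul]
  · rintro rfl
    exact ⟨huh, fun y hy => hhull y hy⟩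

/-- The value of the inverse of `finRotate`. -/
lemma cycVal (m : ℕ) (k : Fin (m + 1)) :
    (((finRotate (m + 1)).symm k : Fin (m + 1)) : ℕ) = if (k : ℕ) = 0 then m else (k : ℕ) - 1 := by
  by_cases hk : (k : ℕ) = 0
  · have hk0 : k = 0 := Fin.ext hk
    subst hk0
    have h1 : (finRotate (m + 1)).symm 0 = Fin.last m := by
      rw [Equiv.symm_apply_eq, finRotate_last]
    simp [h1]
  · have hlt : (k : ℕ) - 1 < m + 1 := by omega
    set j : Fin (m + 1) := ⟨(k : ℕ) - 1, hlt⟩ with hj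
    have hjlt : j < Fin.last m := by
      rw [Fin.lt_iff_val_lt_val]
      simp only [Fin.val_last, hj]
      omega
    have hfj : finRotate (m + 1) j = k := by
      rw [finRotate_succ_apply]
      apply Fin.ext
      rw [Fin.val_add_one_of_lt hjlt]
      simp only [hj]
      omega
    have h2 : (finRotate (m + 1)).symm k = j := by rw [Equiv.symm_apply_eq, hfj]
    rw [h2, if_neg hk]

/-- Every vertex of the permutohedron arises as a vertex of the
cyclopermutohedron: for every point `v` whose coordinates are a permutation of
`(1, …, n)` there is a diagonal-free `ξ` with pairwise distinct coordinates such that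
`Π_n^ξ = {u}` and `u − Σ_{i : n·ξ_i > Σ_j ξ_j} R_i = v`. -/
theorem vertices_of_cyclopermutohedron (n : ℕ) (hn : 3 ≤ n)
    (v : EuclideanSpace ℝ (Fin n))
    (hv : ∃ σ : Equiv.Perm (Fin n), ∀ i, v i = ((σ i : ℕ) : ℝ) + 1) :
    ∃ ξ : EuclideanSpace ℝ (Fin n),
      (∀ i j : Fin n, i ≠ j → ξ i ≠ ξ j) ∧
      (∀ i : Fin n, (n : ℝ) * ξ i ≠ ∑ j, ξ j) ∧
      ∃ u : EuclideanSpace ℝ (Fin n),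
        face (permutohedron n) ξ = {u} ∧
        u - ∑ i ∈ Finset.univ.filter (fun i : Fin n => (∑ j, ξ j) < (n : ℝ) * ξ i), Rpt n i
          = v := by
  obtain ⟨m, rfl⟩ : ∃ m, n = m + 1 := ⟨n - 1, by omega⟩
  obtain ⟨σ, hσ⟩ := hv
  have hm : 2 ≤ m := by omega
  set R : ℝ := ((m + 1 : ℕ) : ℝ) with hRdef
  have hR : (3 : ℝ) ≤ R := by rw [hRdef]; exact_mod_cast hn
  have hRm : (m : ℝ) + 1 = R := by rw [hRdef]; push_cast; ring
  set π : Equiv.Perm (Fin (m + 1)) := σ.trans (finRotate (m + 1)).symm with hπdef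
  set i₀ : Fin (m + 1) := σ.symm 0 with hi₀def
  have hσi₀ : σ i₀ = 0 := σ.apply_symm_apply 0
  have hσne : ∀ i, i ≠ i₀ → (σ i : ℕ) ≠ 0 := by
    intro i hi h
    exact hi (by rw [hi₀def, Equiv.eq_symm_apply]; exact Fin.ext h)
  have hπval : ∀ i, ((π i : Fin (m + 1)) : ℕ)
      = if ((σ i : Fin (m + 1)) : ℕ) = 0 then m else (σ i : ℕ) - 1 := fun i => cycVal m (σ i)
  have hπi₀ : ((π i₀ : Fin (m + 1)) : ℕ) = m := by rw [hπval]; simp [hσi₀]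
  have hπne : ∀ i, i ≠ i₀ → ((π i : Fin (m + 1)) : ℕ) = (σ i : ℕ) - 1 := by
    intro i hi; rw [hπval, if_neg (hσne i hi)]
  have hπlt : ∀ i, i ≠ i₀ → ((π i : Fin (m + 1)) : ℕ) < m := by
    intro i hi
    rw [hπne i hi]
    have h1 : (σ i : ℕ) ≠ 0 := hσne i hi
    have h2 : (σ i : ℕ) < m + 1 := (σ i).isLt
    omega
  set u : EuclideanSpace ℝ (Fin (m + 1)) := WithLp.toLp 2 (fun i => ((π i : ℕ) : ℝ) + 1) with hudef
  set ξ : EuclideanSpace ℝ (Fin (m + 1)) :=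
    WithLp.toLp 2 (fun i => if i = i₀ then R ^ 2 else ((π i : ℕ) : ℝ) + 1) with hξdef
  have hξi₀ : ξ i₀ = R ^ 2 := if_pos rfl
  have hξne : ∀ i, i ≠ i₀ → ξ i = ((π i : ℕ) : ℝ) + 1 := fun i hi => if_neg hi
  have hξlb : ∀ i, i ≠ i₀ → (1 : ℝ) ≤ ξ i := by
    intro i hi
    rw [hξne i hi]
    have : (0 : ℝ) ≤ ((π i : ℕ) : ℝ) := Nat.cast_nonneg _
    linarith
  have hξub : ∀ i, i ≠ i₀ → ξ i ≤ R := by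
    intro i hi
    rw [hξne i hi]
    have h1 : ((π i : ℕ) : ℝ) ≤ (m : ℝ) := by exact_mod_cast le_of_lt (hπlt i hi)
    linarith [hRm]
  set T : ℝ := ∑ j ∈ Finset.univ.erase i₀, ξ j with hTdef
  have hsum : ∑ j, ξ j = R ^ 2 + T := by
    rw [← Finset.add_sum_erase _ _ (Finset.mem_univ i₀), hξi₀]
  have hcard : (Finset.univ.erase i₀).card = m := by
    rw [Finset.card_erase_of_mem (Finset.mem_univ i₀), Finset.card_univ, Fintype.card_fin]
    omega
  have hT1 : (m : ℝ) ≤ T := by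
    have h := Finset.card_nsmul_le_sum (Finset.univ.erase i₀) ξ 1
      (fun i hi => hξlb i (Finset.ne_of_mem_erase hi))
    rw [hcard, nsmul_eq_mul, mul_one] at h
    rw [hTdef]
    exact h
  have hT2 : T ≤ (m : ℝ) * R := by
    have h := Finset.sum_le_card_nsmul (Finset.univ.erase i₀) ξ R
      (fun i hi => hξub i (Finset.ne_of_mem_erase hi))
    rw [hcard, nsmul_eq_mul] at h
    rw [hTdef]
    exact h
  have hstrict1 : ∀ i, i ≠ i₀ → R * ξ i < ∑ j, ξ j := by
    intro i hi
    rw [hsum]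
    have h1 : ξ i ≤ R := hξub i hi
    nlinarith [hT1, hR, hRm, mul_le_mul_of_nonneg_left h1 (by linarith : (0:ℝ) ≤ R)]
  have hstrict2 : ∑ j, ξ j < R * ξ i₀ := by
    rw [hsum, hξi₀]
    nlinarith [hT2, hR, hRm]
  have hξbig : ∀ j, j ≠ i₀ → ξ j < ξ i₀ := by
    intro j hj
    rw [hξi₀]
    have := hξub j hj
    nlinarith [hR]
  have hdist : ∀ i j : Fin (m + 1), i ≠ j → ξ i ≠ ξ j := by
    intro i j hij
    by_cases hi : i = i₀
    · subst hi
      exact (hξbig j (fun h => hij h.symm)).ne'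
    · by_cases hj : j = i₀
      · subst hj
        exact (hξbig i hi).ne
      · rw [hξne i hi, hξne j hj]
        intro h
        have h1 : ((π i : ℕ) : ℝ) = ((π j : ℕ) : ℝ) := by linarith
        have h2 : (π i : ℕ) = (π j : ℕ) := by exact_mod_cast h1
        exact hij (π.injective (Fin.ext h2))
  have hdiag : ∀ i : Fin (m + 1), R * ξ i ≠ ∑ j, ξ j := by
    intro i
    by_cases hi : i = i₀
    · subst hi; exact ne_of_gt hstrict2
    · exact ne_of_lt (hstrict1 i hi)
  set S : Set (EuclideanSpace ℝ (Fin (m + 1))) :=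
    {x | ∃ τ : Equiv.Perm (Fin (m + 1)), ∀ i, x i = ((τ i : ℕ) : ℝ) + 1} with hSdef
  have huS : u ∈ S := ⟨π, fun i => rfl⟩
  have hinner : ∀ x y : EuclideanSpace ℝ (Fin (m + 1)), ⟪x, y⟫ = ∑ i, x i * y i := by
    intro x y; simp [PiLp.inner_apply, RCLike.inner_apply, mul_comm]
  set c : Fin (m + 1) → ℝ := fun k => ξ (π.symm k) with hcdef
  have hπi₀' : π i₀ = Fin.last m := Fin.ext (by rw [hπi₀]; rfl)
  have hck : ∀ k : Fin (m + 1), c k = if (k : ℕ) = m then R ^ 2 else ((k : ℕ) : ℝ) + 1 := by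
    intro k
    by_cases hk : (k : ℕ) = m
    · have hkp : k = π i₀ := Fin.ext (by rw [hπi₀]; exact hk)
      rw [if_pos hk]
      show ξ (π.symm k) = R ^ 2
      rw [hkp, Equiv.symm_apply_apply, hξi₀]
    · have h1 : π.symm k ≠ i₀ := by
        intro h
        apply hk
        have : k = π i₀ := by rw [← h, Equiv.apply_symm_apply]
        rw [this, hπi₀]
      show ξ (π.symm k) = _
      rw [hξne _ h1, Equiv.apply_symm_apply, if_neg hk]
  have hc : StrictMono c := by
    intro k l hkl
    have hkval : (k : ℕ) < (l : ℕ) := hkl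
    have hklm : (k : ℕ) ≠ m := by have := l.isLt; omega
    rw [hck k, hck l, if_neg hklm]
    by_cases hl : (l : ℕ) = m
    · rw [if_pos hl]
      have h1 : ((k : ℕ) : ℝ) + 1 ≤ (m : ℝ) := by exact_mod_cast (by omega : (k : ℕ) + 1 ≤ m)
      nlinarith [hR, hRm]
    · rw [if_neg hl]
      have : ((k : ℕ) : ℝ) < ((l : ℕ) : ℝ) := by exact_mod_cast hkval
      linarith
  have hlt : ∀ y ∈ S, y ≠ u → ⟪y, ξ⟫ < ⟪u, ξ⟫ := by
    rintro y ⟨τ, hτ⟩ hyu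
    set ρ : Equiv.Perm (Fin (m + 1)) := π.symm.trans τ with hρdef
    have hρne : ρ ≠ 1 := by
      intro h
      apply hyu
      ext i
      have hτπ : τ i = π i := by
        have h2 := congrArg (fun f : Equiv.Perm (Fin (m + 1)) => f (π i)) h
        simpa [hρdef] using h2
      rw [hτ i, hτπ]
    have key := rearr (m + 1) c hc ρ hρne
    rw [hinner, hinner]
    have h1 : ∑ i, ξ i * ((τ i : ℕ) : ℝ) = ∑ k, c k * ((ρ k : ℕ) : ℝ) :=
      (Equiv.sum_comp π.symm (fun i => ξ i * ((τ i : ℕ) : ℝ))).symm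
    have h2 : ∑ i, ξ i * ((π i : ℕ) : ℝ) = ∑ k, c k * ((k : ℕ) : ℝ) := by
      rw [← Equiv.sum_comp π.symm (fun i => ξ i * ((π i : ℕ) : ℝ))]
      refine Finset.sum_congr rfl fun k _ => ?_
      simp [Equiv.apply_symm_apply, hcdef]
    calc ∑ i, y i * ξ i = ∑ i, (ξ i * ((τ i : ℕ) : ℝ) + ξ i) := by
          refine Finset.sum_congr rfl fun i _ => ?_
          rw [hτ i]; ring
      _ = ∑ i, ξ i * ((τ i : ℕ) : ℝ) + ∑ i, ξ i := Finset.sum_add_distrib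
      _ < ∑ i, ξ i * ((π i : ℕ) : ℝ) + ∑ i, ξ i := by
          rw [h1, h2]; linarith [key]
      _ = ∑ i, (ξ i * ((π i : ℕ) : ℝ) + ξ i) := Finset.sum_add_distrib.symm
      _ = ∑ i, u i * ξ i := by
          refine Finset.sum_congr rfl fun i _ => ?_
          show _ = (((π i : ℕ) : ℝ) + 1) * ξ i
          ring
  have hperm : permutohedron (m + 1) = convexHull ℝ S := by rw [hSdef, permutohedron]
  have hface : face (permutohedron (m + 1)) ξ = {u} := by
    rw [hperm]
    exact face_singleton S u ξ huS hlt
  have hfilter : Finset.univ.filter (fun i : Fin (m + 1) => (∑ j, ξ j) < R * ξ i) = {i₀} := by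
    ext i
    simp only [Finset.mem_filter, Finset.mem_univ, true_and, Finset.mem_singleton]
    constructor
    · intro h
      by_contra hi
      exact absurd h (not_lt.2 (le_of_lt (hstrict1 i hi)))
    · rintro rfl
      exact hstrict2
  refine ⟨ξ, hdist, hdiag, u, hface, ?_⟩
  rw [hfilter, Finset.sum_singleton]
  ext i
  show u i - Rpt (m + 1) i₀ i = v i
  have hRpt : Rpt (m + 1) i₀ i = R * (if i = i₀ then 1 else 0) - 1 := by
    show R * (EuclideanSpace.single i₀ (1:ℝ)) i - allOnes (m+1) i = _
    rw [EuclideanSpace.single_apply]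
    rfl
  rw [hσ i, hRpt]
  by_cases hi : i = i₀
  · subst hi
    rw [if_pos rfl, hσi₀]
    have hu0 : u i₀ = R := by
      show ((π i₀ : ℕ) : ℝ) + 1 = R
      rw [hπi₀]; exact hRm
    rw [hu0]
    simp
  · rw [if_neg hi]
    have h1 : u i = (((σ i : ℕ) - 1 : ℕ) : ℝ) + 1 := by
      show ((π i : ℕ) : ℝ) + 1 = _
      rw [hπne i hi]
    have h2 : (((σ i : ℕ) - 1 : ℕ) : ℝ) = ((σ i : ℕ) : ℝ) - 1 := by
      have := hσne i hi
      rw [Nat.cast_sub (by omega : 1 ≤ (σ i : ℕ))]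
      norm_num
    rw [h1, h2]
    ring
end
end

section
/- Edge criterion for the permutohedron: let v, w ∈ ℝ^n be two distinct points whose coordinates are permutations of (1, 2, …, n). Then there exists a nonzero ξ ∈ ℝ^n such that Π_n^ξ equals the segment [v, w] if and only if there exist indices i ≠ j with v_i = w_j, v_j = w_i, |v_i − v_j| = 1, and v_l = w_l for all l ∉ {i, j} (i.e. w is obtained from v by permuting two neighbor entries). -/
open scoped Pointwise RealInnerProductSpace BigOperators

noncomputable section

section Helpers
open Finset
variable {n : ℕ}

def Verts (n : ℕ) : Set (EuclideanSpace ℝ (Fin n)) :=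
  {x | ∃ σ : Equiv.Perm (Fin n), ∀ i, x i = ((σ i : ℕ) : ℝ) + 1}

lemma inner_eq (x y : EuclideanSpace ℝ (Fin n)) : ⟪x, y⟫ = ∑ i, x i * y i := by
  simp [PiLp.inner_apply, RCLike.inner_apply, conj_trivial]
  exact Finset.sum_congr rfl fun _ _ => mul_comm _ _

lemma vert_ne {σ : Equiv.Perm (Fin n)} {x : EuclideanSpace ℝ (Fin n)}
    (hx : ∀ i, x i = ((σ i : ℕ) : ℝ) + 1) {a b : Fin n} (hab : a ≠ b) : x a ≠ x b := by
  rw [hx, hx]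
  intro h
  have : ((σ a : ℕ) : ℝ) = ((σ b : ℕ) : ℝ) := by linarith
  exact hab (σ.injective (Fin.ext (by exact_mod_cast this)))

lemma nat_one_le_sub_sq {p q : ℕ} (h : p ≠ q) : (1:ℝ) ≤ ((p:ℝ) - q)^2 := by
  have h1 : (1:ℤ) ≤ |(p:ℤ) - q| := Int.one_le_abs (sub_ne_zero.2 (by exact_mod_cast h))
  have h2 : (1:ℝ) ≤ |(p:ℝ) - q| := by
    have : ((1:ℤ):ℝ) ≤ ((|(p:ℤ) - q| : ℤ) : ℝ) := Int.cast_le.2 h1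
    push_cast at this
    convert this using 2
  nlinarith [sq_abs ((p:ℝ) - q), abs_nonneg ((p:ℝ) - q)]

lemma vert_sum_sq {σ : Equiv.Perm (Fin n)} {x : EuclideanSpace ℝ (Fin n)}
    (hx : ∀ i, x i = ((σ i : ℕ) : ℝ) + 1) :
    ∑ i, x i * x i = ∑ i : Fin n, (((i:ℕ):ℝ)+1) * (((i:ℕ):ℝ)+1) := by
  simp_rw [hx]
  exact Equiv.sum_comp σ (fun k => (((k:ℕ):ℝ)+1) * (((k:ℕ):ℝ)+1))

lemma vert_sum {σ : Equiv.Perm (Fin n)} {x : EuclideanSpace ℝ (Fin n)}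
    (hx : ∀ i, x i = ((σ i : ℕ) : ℝ) + 1) :
    ∑ i, x i = ∑ i : Fin n, (((i:ℕ):ℝ)+1) := by
  simp_rw [hx]
  exact Equiv.sum_comp σ (fun k => ((k:ℕ):ℝ)+1)

lemma vert_norm_eq {x y : EuclideanSpace ℝ (Fin n)} (hx : x ∈ Verts n) (hy : y ∈ Verts n) :
    ‖x‖ = ‖y‖ := by
  obtain ⟨σ, hx⟩ := hx
  obtain ⟨τ, hy⟩ := hy
  have h1 : ‖x‖^2 = ‖y‖^2 := by
    rw [← real_inner_self_eq_norm_sq, ← real_inner_self_eq_norm_sq, inner_eq, inner_eq,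
      vert_sum_sq hx, vert_sum_sq hy]
  exact (sq_eq_sq₀ (norm_nonneg _) (norm_nonneg _)).1 h1

lemma vert_dist {x y : EuclideanSpace ℝ (Fin n)} (hx : x ∈ Verts n) (hy : y ∈ Verts n)
    (hne : x ≠ y) : (2:ℝ) ≤ ∑ l, (x l - y l)^2 := by
  obtain ⟨σ, hxσ⟩ := hx
  obtain ⟨τ, hyτ⟩ := hy
  have hterm : ∀ l, x l ≠ y l → (1:ℝ) ≤ (x l - y l)^2 := by
    intro l hl
    rw [hxσ, hyτ]
    have : (σ l : ℕ) ≠ (τ l : ℕ) := by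
      intro h; apply hl; rw [hxσ, hyτ, h]
    have := nat_one_le_sub_sq this
    convert this using 2
    ring
  obtain ⟨a, ha⟩ : ∃ a, x a ≠ y a := by
    by_contra h
    push_neg at h
    exact hne (WithLp.ofLp_injective 2 (funext h))
  obtain ⟨b, hba, hb⟩ : ∃ b, b ≠ a ∧ x b ≠ y b := by
    by_contra h
    push_neg at h
    apply ha
    have hsum : ∑ l, x l = ∑ l, y l := by rw [vert_sum hxσ, vert_sum hyτ]
    have h1 : ∑ l ∈ univ.erase a, x l = ∑ l ∈ univ.erase a, y l :=
      Finset.sum_congr rfl (fun l hl => h l (Finset.ne_of_mem_erase hl))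
    have h2 := Finset.sum_erase_add univ x (Finset.mem_univ a)
    have h3 := Finset.sum_erase_add univ y (Finset.mem_univ a)
    linarith
  have hsub : ∑ l ∈ ({b, a} : Finset (Fin n)), (x l - y l)^2 ≤ ∑ l, (x l - y l)^2 :=
    Finset.sum_le_sum_of_subset_of_nonneg (Finset.subset_univ _)
      (fun l _ _ => sq_nonneg _)
  rw [Finset.sum_pair hba] at hsub
  have := hterm a ha
  have := hterm b hb
  linarith

lemma inner_swap (x ξ : EuclideanSpace ℝ (Fin n)) {a b : Fin n} (hab : a ≠ b) :
    ∑ l, x (Equiv.swap a b l) * ξ l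
      = (∑ l, x l * ξ l) + (x b - x a) * ξ a + (x a - x b) * ξ b := by
  have key : ∑ l, (x (Equiv.swap a b l) - x l) * ξ l
      = (x b - x a) * ξ a + (x a - x b) * ξ b := by
    rw [← Finset.sum_subset (Finset.subset_univ ({a, b} : Finset (Fin n)))]
    · rw [Finset.sum_pair hab, Equiv.swap_apply_left, Equiv.swap_apply_right]
    · intro l _ hl
      simp only [Finset.mem_insert, Finset.mem_singleton] at hl
      push_neg at hl
      rw [Equiv.swap_apply_of_ne_of_ne hl.1 hl.2, sub_self, zero_mul]
  have expand : ∑ l, (x (Equiv.swap a b l) - x l) * ξ l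
      = ∑ l, x (Equiv.swap a b l) * ξ l - ∑ l, x l * ξ l := by
    rw [← Finset.sum_sub_distrib]
    exact Finset.sum_congr rfl (fun l _ => by ring)
  linarith

lemma swap_vert {σ : Equiv.Perm (Fin n)} {x : EuclideanSpace ℝ (Fin n)}
    (hx : ∀ i, x i = ((σ i : ℕ) : ℝ) + 1) (a b : Fin n) :
    (WithLp.toLp 2 (fun l => x (Equiv.swap a b l)) : EuclideanSpace ℝ (Fin n)) ∈ Verts n :=
  ⟨(Equiv.swap a b).trans σ, fun l => hx _⟩

lemma max_mono {σ : Equiv.Perm (Fin n)} {x ξ : EuclideanSpace ℝ (Fin n)}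
    (hx : ∀ i, x i = ((σ i : ℕ) : ℝ) + 1)
    (hmax : ∀ y ∈ Verts n, ∑ l, y l * ξ l ≤ ∑ l, x l * ξ l)
    {a b : Fin n} (hab : ξ a < ξ b) : x a < x b := by
  have hne : a ≠ b := by rintro rfl; exact lt_irrefl _ hab
  have hy := hmax _ (swap_vert hx a b)
  simp only [WithLp.ofLp_toLp] at hy
  rw [inner_swap x ξ hne] at hy
  have hxne : x a ≠ x b := vert_ne hx hne
  rcases lt_or_gt_of_ne hxne with h | h
  · exact h
  · nlinarith

lemma hull_max {ξ : EuclideanSpace ℝ (Fin n)} {c : ℝ}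
    (hx : ∀ u ∈ Verts n, ⟪u, ξ⟫ ≤ c) :
    ∀ y ∈ convexHull ℝ (Verts n), ⟪y, ξ⟫ ≤ c := by
  intro y hy
  have hconv : Convex ℝ {y : EuclideanSpace ℝ (Fin n) | ⟪y, ξ⟫ ≤ c} := by
    refine convex_halfSpace_le ⟨?_, ?_⟩ c
    · intro u v; exact inner_add_left u v ξ
    · intro r u; exact real_inner_smul_left u ξ r
  exact convexHull_min hx hconv hy

lemma segment_norm {E : Type*} [NormedAddCommGroup E] [NormedSpace ℝ E] [StrictConvexSpace ℝ E]
    {u v w : E} (h : u ∈ segment ℝ v w) (hv : ‖v‖ = ‖u‖) (hw : ‖w‖ = ‖u‖) :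
    u = v ∨ u = w := by
  obtain ⟨a, b, ha, hb, hab, rfl⟩ := h
  rcases eq_or_lt_of_le ha with ha0 | ha0
  · right
    have hb1 : b = 1 := by linarith
    rw [← ha0, hb1, zero_smul, one_smul, zero_add]
  rcases eq_or_lt_of_le hb with hb0 | hb0
  · left
    have ha1 : a = 1 := by linarith
    rw [← hb0, ha1, zero_smul, one_smul, add_zero]
  by_cases hvw : v = w
  · left
    rw [hvw, ← add_smul, hab, one_smul]
  exfalso
  exact lt_irrefl _ (norm_combo_lt_of_ne (le_of_eq hv) (le_of_eq hw) hvw ha0 hb0 hab)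

lemma perm_eq_of_order (σ τ : Equiv.Perm (Fin n))
    (h : ∀ a b, σ a < σ b ↔ τ a < τ b) : σ = τ := by
  have key : ∀ ρ : Equiv.Perm (Fin n), ∀ a, (ρ a : ℕ) = (univ.filter fun l => ρ l < ρ a).card := by
    intro ρ a
    have h1 : (univ.filter fun l => ρ l < ρ a).card
        = (univ.filter fun k => k < ρ a).card :=
      Finset.card_equiv ρ (by simp)
    have h2 : (univ.filter fun k => k < ρ a) = Finset.Iio (ρ a) := by
      ext k; simp
    rw [h1, h2, Fin.card_Iio]
  ext a
  have h3 : (univ.filter fun l => σ l < σ a) = (univ.filter fun l => τ l < τ a) := by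
    ext l; simp [h]
  have := key σ a
  rw [h3, ← key τ a] at this
  exact this

lemma exists_mid {σ : Equiv.Perm (Fin n)} {v ξ : EuclideanSpace ℝ (Fin n)}
    (hvσ : ∀ l, v l = ((σ l : ℕ) : ℝ) + 1)
    (hmono : ∀ a b : Fin n, ξ a < ξ b → v a < v b)
    {i j : Fin n} (hξij : ξ i = ξ j) (hlt : (σ i : ℕ) + 1 < (σ j : ℕ)) :
    ∃ m, m ≠ i ∧ m ≠ j ∧ ξ m = ξ i := by
  have hc : (σ i : ℕ) + 1 < n := lt_trans hlt (σ j).isLt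
  set c : Fin n := ⟨(σ i : ℕ) + 1, hc⟩ with hcdef
  refine ⟨σ.symm c, ?_, ?_, ?_⟩
  · intro h
    have : σ (σ.symm c) = σ i := by rw [h]
    rw [σ.apply_symm_apply] at this
    have : (c : ℕ) = (σ i : ℕ) := by rw [this]
    simp [hcdef] at this
  · intro h
    have : σ (σ.symm c) = σ j := by rw [h]
    rw [σ.apply_symm_apply] at this
    have : (c : ℕ) = (σ j : ℕ) := by rw [this]
    simp only [hcdef] at this
    omega
  · have hvm : v (σ.symm c) = ((σ i : ℕ) : ℝ) + 2 := by
      rw [hvσ, σ.apply_symm_apply]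
      simp [hcdef]
      push_cast
      ring
    have h1 : v i < v (σ.symm c) := by
      rw [hvσ i, hvm]; linarith
    have h2 : v (σ.symm c) < v j := by
      rw [hvm, hvσ j]
      have : ((σ i : ℕ) : ℝ) + 1 < ((σ j : ℕ) : ℝ) := by exact_mod_cast hlt
      linarith
    have hle1 : ξ (σ.symm c) ≤ ξ j := by
      by_contra h
      push_neg at h
      exact absurd (hmono _ _ h) (not_lt.2 (le_of_lt h2))
    have hle2 : ξ i ≤ ξ (σ.symm c) := by
      by_contra h
      push_neg at h
      exact absurd (hmono _ _ h) (not_lt.2 (le_of_lt h1))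
    rw [← hξij] at hle1
    exact le_antisymm hle1 hle2

lemma sum_sq_sub (x y : EuclideanSpace ℝ (Fin n)) :
    ∑ l, (x l - y l)^2
      = ∑ l, x l * x l - 2 * ∑ l, x l * y l + ∑ l, y l * y l := by
  have : ∀ l : Fin n, (x l - y l)^2 = x l * x l - 2 * (x l * y l) + y l * y l :=
    fun l => by ring
  simp_rw [this, Finset.sum_add_distrib, Finset.sum_sub_distrib, ← Finset.mul_sum]
lemma perm_eq_hull : permutohedron n = convexHull ℝ (Verts n) := rfl


end Helpers

open Finset in
/-- Edge criterion for the permutohedron: two distinct vertices `v, w` of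
`Π_n` span an edge (a face of the form `Π_n^ξ = [v, w]` for some `ξ ≠ 0`) if and only if
`w` is obtained from `v` by permuting two neighbor entries. -/
theorem permutohedron_edge_criterion (n : ℕ)
    (v w : EuclideanSpace ℝ (Fin n))
    (hv : ∃ σ : Equiv.Perm (Fin n), ∀ i, v i = ((σ i : ℕ) : ℝ) + 1)
    (hw : ∃ σ : Equiv.Perm (Fin n), ∀ i, w i = ((σ i : ℕ) : ℝ) + 1)
    (hvw : v ≠ w) :
    (∃ ξ : EuclideanSpace ℝ (Fin n), ξ ≠ 0 ∧ face (permutohedron n) ξ = segment ℝ v w)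
      ↔ ∃ i j : Fin n, i ≠ j ∧ v i = w j ∧ v j = w i ∧ |v i - v j| = 1 ∧
          ∀ l : Fin n, l ≠ i → l ≠ j → v l = w l := by
  classical
  obtain ⟨σ, hvσ⟩ := hv
  obtain ⟨τ, hwτ⟩ := hw
  have hvV : v ∈ Verts n := ⟨σ, hvσ⟩
  have hwV : w ∈ Verts n := ⟨τ, hwτ⟩
  have hvP : v ∈ permutohedron n := by rw [perm_eq_hull]; exact subset_convexHull ℝ _ hvV
  have hwP : w ∈ permutohedron n := by rw [perm_eq_hull]; exact subset_convexHull ℝ _ hwV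
  constructor
  · rintro ⟨ξ, hξ0, hface⟩
    have hvF : v ∈ face (permutohedron n) ξ := by rw [hface]; exact left_mem_segment ℝ v w
    have hwF : w ∈ face (permutohedron n) ξ := by rw [hface]; exact right_mem_segment ℝ v w
    have hmaxv : ∀ y ∈ permutohedron n, ⟪y, ξ⟫ ≤ ⟪v, ξ⟫ := hvF.2
    have hmaxw : ∀ y ∈ permutohedron n, ⟪y, ξ⟫ ≤ ⟪w, ξ⟫ := hwF.2
    have hVsub : ∀ u : EuclideanSpace ℝ (Fin n), u ∈ Verts n → u ∈ permutohedron n := by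
      intro u hu
      rw [perm_eq_hull]
      exact subset_convexHull ℝ _ hu
    have hmaxv' : ∀ y ∈ Verts n, ∑ l, y l * ξ l ≤ ∑ l, v l * ξ l := fun y hy => by
      rw [← inner_eq, ← inner_eq]; exact hmaxv y (hVsub y hy)
    have hmaxw' : ∀ y ∈ Verts n, ∑ l, y l * ξ l ≤ ∑ l, w l * ξ l := fun y hy => by
      rw [← inner_eq, ← inner_eq]; exact hmaxw y (hVsub y hy)
    have hmonov : ∀ a b : Fin n, ξ a < ξ b → v a < v b := fun a b h => max_mono hvσ hmaxv' h
    have hmonow : ∀ a b : Fin n, ξ a < ξ b → w a < w b := fun a b h => max_mono hwτ hmaxw' h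
    -- any maximizing vertex is v or w
    have hclass : ∀ u ∈ Verts n, (∑ l, u l * ξ l = ∑ l, v l * ξ l) → u = v ∨ u = w := by
      intro u huV hInner
      have huF : u ∈ face (permutohedron n) ξ := by
        refine ⟨hVsub u huV, fun y hy => ?_⟩
        have : ⟪u, ξ⟫ = ⟪v, ξ⟫ := by rw [inner_eq, inner_eq]; exact hInner
        rw [this]; exact hmaxv y hy
      rw [hface] at huF
      exact segment_norm huF (vert_norm_eq hvV huV) (vert_norm_eq hwV huV)
    -- swapping along an equal pair of ξ-coordinates sends v to w
    have hswap : ∀ a b : Fin n, a ≠ b → ξ a = ξ b →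
        (fun l => v (Equiv.swap a b l)) = w := by
      intro a b hab hξab
      have huV := swap_vert hvσ a b
      have hInner : ∑ l, v (Equiv.swap a b l) * ξ l = ∑ l, v l * ξ l := by
        rw [inner_swap v ξ hab, hξab]
        ring
      rcases hclass (WithLp.toLp 2 fun l => v (Equiv.swap a b l)) huV hInner with h | h
      · exfalso
        have h2 : v (Equiv.swap a b a) = v a := congrFun (congrArg WithLp.ofLp h) a
        rw [Equiv.swap_apply_left] at h2
        exact vert_ne hvσ (Ne.symm hab) h2
      · exact congrArg WithLp.ofLp h
    -- there is a pair of equal ξ-coordinates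
    have hvlt : ∀ a b : Fin n, v a < v b ↔ σ a < σ b := by
      intro a b
      rw [hvσ, hvσ, Fin.lt_def]
      constructor
      · intro h
        have h2 : ((σ a : ℕ) : ℝ) < ((σ b : ℕ) : ℝ) := by linarith
        exact_mod_cast h2
      · intro h
        have h2 : ((σ a : ℕ) : ℝ) < ((σ b : ℕ) : ℝ) := by exact_mod_cast h
        linarith
    have hwlt : ∀ a b : Fin n, w a < w b ↔ τ a < τ b := by
      intro a b
      rw [hwτ, hwτ, Fin.lt_def]
      constructor
      · intro h
        have h2 : ((τ a : ℕ) : ℝ) < ((τ b : ℕ) : ℝ) := by linarith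
        exact_mod_cast h2
      · intro h
        have h2 : ((τ a : ℕ) : ℝ) < ((τ b : ℕ) : ℝ) := by exact_mod_cast h
        linarith
    have hpair : ∃ a b : Fin n, a ≠ b ∧ ξ a = ξ b := by
      by_contra hp
      push_neg at hp
      apply hvw
      have horder : ∀ a b : Fin n, σ a < σ b ↔ τ a < τ b := by
        intro a b
        constructor
        · intro h
          have hab : a ≠ b := by rintro rfl; exact lt_irrefl _ h
          have hva : v a < v b := (hvlt a b).2 h
          rcases lt_trichotomy (ξ a) (ξ b) with hh | hh | hh
          · exact (hwlt a b).1 (hmonow a b hh)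
          · exact absurd hh (hp a b hab)
          · exact absurd (hmonov b a hh) (not_lt.2 (le_of_lt hva))
        · intro h
          have hab : a ≠ b := by rintro rfl; exact lt_irrefl _ h
          have hwa : w a < w b := (hwlt a b).2 h
          rcases lt_trichotomy (ξ a) (ξ b) with hh | hh | hh
          · exact (hvlt a b).1 (hmonov a b hh)
          · exact absurd hh (hp a b hab)
          · exact absurd (hmonow b a hh) (not_lt.2 (le_of_lt hwa))
      have hστ : σ = τ := perm_eq_of_order σ τ horder
      refine PiLp.ext fun l => ?_
      rw [hvσ, hwτ, hστ]
    obtain ⟨i, j, hij, hξij⟩ := hpair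
    have hwswap : (fun l => v (Equiv.swap i j l)) = w := hswap i j hij hξij
    have hwj : w j = v i := by
      have h2 := congrFun hwswap j
      rw [Equiv.swap_apply_right] at h2
      exact h2.symm
    have hwi : w i = v j := by
      have h2 := congrFun hwswap i
      rw [Equiv.swap_apply_left] at h2
      exact h2.symm
    have hwl : ∀ l : Fin n, l ≠ i → l ≠ j → v l = w l := by
      intro l h1 h2
      have h3 := congrFun hwswap l
      rw [Equiv.swap_apply_of_ne_of_ne h1 h2] at h3
      exact h3
    have habs : |v i - v j| = 1 := by
      by_contra habs
      have hσij : (σ i : ℕ) ≠ (σ j : ℕ) := by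
        intro h
        apply vert_ne hvσ hij
        rw [hvσ, hvσ, h]
      obtain ⟨m, hmi, hmj, hξm⟩ : ∃ m : Fin n, m ≠ i ∧ m ≠ j ∧ ξ m = ξ i := by
        rcases lt_or_gt_of_ne hσij with h | h
        · have h2 : (σ i : ℕ) + 1 < (σ j : ℕ) := by
            rcases eq_or_lt_of_le (Nat.succ_le_of_lt h) with he | hl
            · exfalso
              apply habs
              rw [hvσ, hvσ]
              have h3 : ((σ i : ℕ) : ℝ) + 1 - (((σ j : ℕ) : ℝ) + 1) = -1 := by
                have : ((σ j : ℕ) : ℝ) = ((σ i : ℕ) : ℝ) + 1 := by exact_mod_cast he.symm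
                rw [this]; ring
              rw [h3, abs_neg, abs_one]
            · exact hl
          exact exists_mid hvσ hmonov hξij h2
        · have h2 : (σ j : ℕ) + 1 < (σ i : ℕ) := by
            rcases eq_or_lt_of_le (Nat.succ_le_of_lt h) with he | hl
            · exfalso
              apply habs
              rw [hvσ, hvσ]
              have h3 : ((σ i : ℕ) : ℝ) + 1 - (((σ j : ℕ) : ℝ) + 1) = 1 := by
                have : ((σ i : ℕ) : ℝ) = ((σ j : ℕ) : ℝ) + 1 := by exact_mod_cast he.symm
                rw [this]; ring
              rw [h3, abs_one]
            · exact hl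
          obtain ⟨m, h1, h2', h3⟩ := exists_mid hvσ hmonov hξij.symm h2
          exact ⟨m, h2', h1, by rw [h3, hξij]⟩
      have hswap2 : (fun l => v (Equiv.swap i m l)) = w := hswap i m (Ne.symm hmi) hξm.symm
      have hwj2 : w j = v j := by
        have h3 := congrFun hswap2 j
        rw [Equiv.swap_apply_of_ne_of_ne (Ne.symm hij) (Ne.symm hmj)] at h3
        exact h3.symm
      rw [hwj] at hwj2
      exact vert_ne hvσ hij hwj2
    exact ⟨i, j, hij, hwj.symm, hwi.symm, habs, hwl⟩

  · rintro ⟨i, j, hij, hvi, hvj, habs, hrest⟩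
    set ξ : EuclideanSpace ℝ (Fin n) := v + w with hξdef
    have hξapp : ∀ l, ξ l = v l + w l := fun l => rfl
    have hξ0 : ξ ≠ 0 := by
      intro h0
      have h1 : ξ i = 0 := by rw [h0]; rfl
      rw [hξapp, hvσ, hwτ] at h1
      have := (σ i : ℕ).cast_nonneg (α := ℝ)
      have := (τ i : ℕ).cast_nonneg (α := ℝ)
      linarith
    have hsplit : ∀ x : EuclideanSpace ℝ (Fin n),
        ∑ l, x l * ξ l = ∑ l, x l * v l + ∑ l, x l * w l := by
      intro x
      rw [← Finset.sum_add_distrib]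
      exact Finset.sum_congr rfl fun l _ => by rw [hξapp]; ring
    have hDvw : ∑ l, (v l - w l)^2 = 2 := by
      rw [← Finset.sum_subset (Finset.subset_univ ({i, j} : Finset (Fin n)))]
      · rw [Finset.sum_pair hij]
        have h1 : (v i - w i)^2 = 1 := by
          rw [← hvj, ← sq_abs, habs]; norm_num
        have h2 : (v j - w j)^2 = 1 := by
          rw [← hvi, ← sq_abs, abs_sub_comm, habs]; norm_num
        rw [h1, h2]; norm_num
      · intro l _ hl
        simp only [Finset.mem_insert, Finset.mem_singleton] at hl
        push_neg at hl
        rw [hrest l hl.1 hl.2, sub_self]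
        norm_num
    have hswvw : ∑ l, w l * v l = ∑ l, v l * w l :=
      Finset.sum_congr rfl fun l _ => mul_comm _ _
    have hCv : ∑ l, v l * v l = ∑ i : Fin n, (((i:ℕ):ℝ)+1) * (((i:ℕ):ℝ)+1) := vert_sum_sq hvσ
    have hCw : ∑ l, w l * w l = ∑ i : Fin n, (((i:ℕ):ℝ)+1) * (((i:ℕ):ℝ)+1) := vert_sum_sq hwτ
    have hSvw : ∑ l, v l * w l = (∑ l, v l * v l) - 1 := by
      have := sum_sq_sub v w
      rw [hDvw] at this
      linarith [hCv, hCw]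
    have hMle : ∀ u ∈ Verts n, u ≠ v → u ≠ w → ∑ l, u l * ξ l + 1 ≤ ∑ l, v l * ξ l := by
      intro u huV hune hunw
      have hDuv := vert_dist huV hvV hune
      have hDuw := vert_dist huV hwV hunw
      have e1 := sum_sq_sub u v
      have e2 := sum_sq_sub u w
      obtain ⟨ρ, huρ⟩ := huV
      have hCu : ∑ l, u l * u l = ∑ i : Fin n, (((i:ℕ):ℝ)+1) * (((i:ℕ):ℝ)+1) := vert_sum_sq huρ
      rw [hsplit u, hsplit v]
      linarith
    have hMeq : ∑ l, w l * ξ l = ∑ l, v l * ξ l := by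
      have hsww : ∑ l, w l * w l = ∑ l, v l * v l := by rw [hCw, hCv]
      rw [hsplit w, hsplit v]
      linarith
    have hMax : ∀ u ∈ Verts n, ∑ l, u l * ξ l ≤ ∑ l, v l * ξ l := by
      intro u huV
      by_cases h1 : u = v
      · subst h1; exact le_refl _
      by_cases h2 : u = w
      · subst h2; exact le_of_eq hMeq
      linarith [hMle u huV h1 h2]
    have hMaxI : ∀ u ∈ Verts n, ⟪u, ξ⟫ ≤ ⟪v, ξ⟫ := fun u hu => by
      rw [inner_eq, inner_eq]; exact hMax u hu
    have hPmax : ∀ y ∈ permutohedron n, ⟪y, ξ⟫ ≤ ⟪v, ξ⟫ := by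
      rw [perm_eq_hull]; exact hull_max hMaxI
    have hvF : v ∈ face (permutohedron n) ξ := ⟨hvP, hPmax⟩
    have hwF : w ∈ face (permutohedron n) ξ := by
      refine ⟨hwP, fun y hy => ?_⟩
      have : ⟪w, ξ⟫ = ⟪v, ξ⟫ := by rw [inner_eq, inner_eq]; exact hMeq
      rw [this]; exact hPmax y hy
    have hconvF : Convex ℝ (face (permutohedron n) ξ) := by
      intro x hx y hy a b ha hb hab
      refine ⟨(convex_convexHull ℝ (Verts n)) hx.1 hy.1 ha hb hab, fun z hz => ?_⟩
      have h1 := hx.2 z hz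
      have h2 := hy.2 z hz
      have hlin : ⟪a • x + b • y, ξ⟫ = a * ⟪x, ξ⟫ + b * ⟪y, ξ⟫ := by
        rw [inner_add_left, real_inner_smul_left, real_inner_smul_left]
      rw [hlin]
      have h3 : a * ⟪z, ξ⟫ + b * ⟪z, ξ⟫ = ⟪z, ξ⟫ := by rw [← add_mul, hab, one_mul]
      linarith [mul_le_mul_of_nonneg_left h1 ha, mul_le_mul_of_nonneg_left h2 hb]
    refine ⟨ξ, hξ0, Set.Subset.antisymm ?_ (hconvF.segment_subset hvF hwF)⟩
    intro x hx
    obtain ⟨hxP, hxmax⟩ := hx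
    have hxval : ⟪v, ξ⟫ ≤ ⟪x, ξ⟫ := hxmax v hvP
    have hxP' : x ∈ convexHull ℝ (Verts n) := hxP
    rw [_root_.convexHull_eq] at hxP'
    obtain ⟨ι, t, cw, z, hc0, hc1, hzV, hcm⟩ := hxP'
    have hinner : ⟪x, ξ⟫ = ∑ i ∈ t, cw i * ⟪z i, ξ⟫ := by
      rw [← hcm, Finset.centerMass_eq_of_sum_1 _ _ hc1, sum_inner]
      exact Finset.sum_congr rfl fun i _ => real_inner_smul_left _ _ _
    have hzle : ∀ i ∈ t, ⟪z i, ξ⟫ ≤ ⟪v, ξ⟫ := fun i hi => hMaxI _ (hzV i hi)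
    have hzmem : ∀ i ∈ t, cw i ≠ 0 → z i ∈ ({v, w} : Set (EuclideanSpace ℝ (Fin n))) := by
      intro i0 hi0 hc
      by_contra hz0
      simp only [Set.mem_insert_iff, Set.mem_singleton_iff] at hz0
      push_neg at hz0
      have hlt : ⟪z i0, ξ⟫ + 1 ≤ ⟪v, ξ⟫ := by
        rw [inner_eq, inner_eq]; exact hMle _ (hzV i0 hi0) hz0.1 hz0.2
      have hcpos : 0 < cw i0 := lt_of_le_of_ne (hc0 i0 hi0) (Ne.symm hc)
      have hstrict : ∑ i ∈ t, cw i * ⟪z i, ξ⟫ < ∑ i ∈ t, cw i * ⟪v, ξ⟫ := by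
        apply Finset.sum_lt_sum
        · exact fun i hi => mul_le_mul_of_nonneg_left (hzle i hi) (hc0 i hi)
        · exact ⟨i0, hi0, mul_lt_mul_of_pos_left (by linarith) hcpos⟩
      rw [← Finset.sum_mul, hc1, one_mul] at hstrict
      rw [← hinner] at hstrict
      linarith
    rw [← convexHull_pair]
    have ht' : x = (t.filter fun i => cw i ≠ 0).centerMass cw z := by
      rw [Finset.centerMass_filter_ne_zero, hcm]
    rw [ht']
    apply Finset.centerMass_mem_convexHull
    · intro i hi; exact hc0 i (Finset.mem_filter.1 hi).1
    · rw [Finset.sum_filter_ne_zero, hc1]; norm_num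
    · intro i hi
      obtain ⟨hit, hine⟩ := Finset.mem_filter.1 hi
      exact hzmem i hit hine
end
end
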